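/- arXiv:2406.17964 — 7 statements merged into one kernel-verified Lean document; each statement's English description precedes it below -/
import Mathlib

section
/- Let G = (I⁰, I¹; F; w) be an instance and let α⁰ and α¹ be refinements of the side-0 and side-1 vertex weights respectively such that both are locally maximin and each is the proportional response of the other. Then for every pair of nonnegative weights c = (c⁰, c¹), the vector c•α is an optimal fractional matching for G^(c): its value Σ_{f∈F} (c•α)(f) equals the maximum value over all feasible vectors of G^(c). -/
open Finset

variable {V : Type*} [DecidableEq V]

/-- `(I0, I1; F; w)` is a valid input instance: the vertex sets `I0`, `I1` are disjoint,
every edge has its first endpoint in `I0` and second endpoint in `I1`,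
and vertex weights are positive. -/
def IsInstance (I0 I1 : Finset V) (F : Finset (V × V)) (w : V → ℝ) : Prop :=
  Disjoint I0 I1 ∧ (∀ e ∈ F, e.1 ∈ I0 ∧ e.2 ∈ I1) ∧ (∀ v ∈ I0 ∪ I1, 0 < w v)

/-- Payload received by a side-0 vertex `i` from edge weights `a`
(the sum of `a` over edges incident to `i`). -/
noncomputable def payload0 (F : Finset (V × V)) (a : V × V → ℝ) (i : V) : ℝ :=
  ∑ e ∈ F.filter (fun e => e.1 = i), a e

/-- Payload received by a side-1 vertex `j` from edge weights `a`. -/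
noncomputable def payload1 (F : Finset (V × V)) (a : V × V → ℝ) (j : V) : ℝ :=
  ∑ e ∈ F.filter (fun e => e.2 = j), a e

/-- `a` is a refinement of the side-0 vertex weights. -/
def IsRefinement0 (I0 : Finset V) (F : Finset (V × V)) (w : V → ℝ) (a : V × V → ℝ) : Prop :=
  (∀ e, 0 ≤ a e) ∧ (∀ e, e ∉ F → a e = 0) ∧
    ∀ i ∈ I0, (∃ j, (i, j) ∈ F) → payload0 F a i = w i

/-- `a` is a refinement of the side-1 vertex weights. -/
def IsRefinement1 (I1 : Finset V) (F : Finset (V × V)) (w : V → ℝ) (a : V × V → ℝ) : Prop :=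
  (∀ e, 0 ≤ a e) ∧ (∀ e, e ∉ F → a e = 0) ∧
    ∀ j ∈ I1, (∃ i, (i, j) ∈ F) → payload1 F a j = w j

/-- Payload density at a side-0 vertex. -/
noncomputable def density0 (F : Finset (V × V)) (w : V → ℝ) (a : V × V → ℝ) (i : V) : ℝ :=
  payload0 F a i / w i

/-- Payload density at a side-1 vertex. -/
noncomputable def density1 (F : Finset (V × V)) (w : V → ℝ) (a : V × V → ℝ) (j : V) : ℝ :=
  payload1 F a j / w j

/-- A side-0 refinement is locally maximin: positive weight is sent only to neighbours
of minimum payload density. -/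
def LocallyMaximin0 (F : Finset (V × V)) (w : V → ℝ) (a : V × V → ℝ) : Prop :=
  ∀ e ∈ F, 0 < a e → ∀ k, (e.1, k) ∈ F → density1 F w a e.2 ≤ density1 F w a k

/-- A side-1 refinement is locally maximin. -/
def LocallyMaximin1 (F : Finset (V × V)) (w : V → ℝ) (a : V × V → ℝ) : Prop :=
  ∀ e ∈ F, 0 < a e → ∀ k, (k, e.2) ∈ F → density0 F w a e.1 ≤ density0 F w a k

/-- `b` is the proportional response to the side-0 refinement `a`. -/
def IsPropRespOf0 (F : Finset (V × V)) (w : V → ℝ) (a b : V × V → ℝ) : Prop :=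
  (∀ e, e ∉ F → b e = 0) ∧ ∀ e ∈ F, b e = a e * w e.2 / payload1 F a e.2

/-- `a` is the proportional response to the side-1 refinement `b`. -/
def IsPropRespOf1 (F : Finset (V × V)) (w : V → ℝ) (b a : V × V → ℝ) : Prop :=
  (∀ e, e ∉ F → a e = 0) ∧ ∀ e ∈ F, a e = b e * w e.1 / payload0 F b e.1

/-- Feasible fractional matching for the vertex-constrained instance `G^(c)`. -/
def FeasibleMatching (I0 I1 : Finset V) (F : Finset (V × V)) (w : V → ℝ)
    (c0 c1 : ℝ) (x : V × V → ℝ) : Prop :=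
  (∀ e, 0 ≤ x e) ∧ (∀ e, e ∉ F → x e = 0) ∧
    (∀ i ∈ I0, payload0 F x i ≤ c0 * w i) ∧ (∀ j ∈ I1, payload1 F x j ≤ c1 * w j)

/-- Value of a fractional matching. -/
noncomputable def matchVal (F : Finset (V × V)) (x : V × V → ℝ) : ℝ := ∑ e ∈ F, x e

/-- The fractional matching `c • α` induced by a refinement pair. -/
noncomputable def cdot (c0 c1 : ℝ) (a0 a1 : V × V → ℝ) : V × V → ℝ :=
  fun e => min (c0 * a0 e) (c1 * a1 e)

lemma fiber_sum0 (I0 : Finset V) (F : Finset (V × V)) (h : ∀ e ∈ F, e.1 ∈ I0)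
    (g : V × V → ℝ) (Y : V → ℝ) :
    ∑ e ∈ F, g e * Y e.1 = ∑ i ∈ I0, Y i * payload0 F g i := by
  rw [← Finset.sum_fiberwise_of_maps_to h (fun e => g e * Y e.1)]
  refine Finset.sum_congr rfl fun i _ => ?_
  rw [payload0, Finset.mul_sum]
  refine Finset.sum_congr rfl fun e he => ?_
  simp only [Finset.mem_filter] at he
  rw [he.2, mul_comm]

lemma fiber_sum1 (I1 : Finset V) (F : Finset (V × V)) (h : ∀ e ∈ F, e.2 ∈ I1)
    (g : V × V → ℝ) (Z : V → ℝ) :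
    ∑ e ∈ F, g e * Z e.2 = ∑ j ∈ I1, Z j * payload1 F g j := by
  rw [← Finset.sum_fiberwise_of_maps_to h (fun e => g e * Z e.2)]
  refine Finset.sum_congr rfl fun j _ => ?_
  rw [payload1, Finset.mul_sum]
  refine Finset.sum_congr rfl fun e he => ?_
  simp only [Finset.mem_filter] at he
  rw [he.2, mul_comm]

/-- **Universal refinement pair for matching.**
If the refinement pair `(a0, a1)` is locally maximin on both sides and the two refinements
are proportional responses to each other, then for every pair of nonnegative weights
`c = (c0, c1)` the induced fractional matching `c • α` is an optimal fractional matching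
for `G^(c)`: it is feasible and its value is the maximum value over all feasible vectors. -/
theorem locally_maximin_pair_universal_for_matching
    (I0 I1 : Finset V) (F : Finset (V × V)) (w : V → ℝ)
    (hG : IsInstance I0 I1 F w)
    (a0 a1 : V × V → ℝ)
    (ha0 : IsRefinement0 I0 F w a0) (ha1 : IsRefinement1 I1 F w a1)
    (hm0 : LocallyMaximin0 F w a0) (hm1 : LocallyMaximin1 F w a1)
    (hpr0 : IsPropRespOf0 F w a0 a1) (hpr1 : IsPropRespOf1 F w a1 a0)
    (c0 c1 : ℝ) (hc0 : 0 ≤ c0) (hc1 : 0 ≤ c1) :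
    FeasibleMatching I0 I1 F w c0 c1 (cdot c0 c1 a0 a1) ∧
      ∀ x, FeasibleMatching I0 I1 F w c0 c1 x →
        matchVal F x ≤ matchVal F (cdot c0 c1 a0 a1) := by
  classical
  obtain ⟨hdisj, hFmem, hwpos⟩ := hG
  obtain ⟨ha0n, ha0z, ha0s⟩ := ha0
  obtain ⟨ha1n, ha1z, ha1s⟩ := ha1
  have hw0 : ∀ e ∈ F, 0 < w e.1 := fun e he =>
    hwpos _ (Finset.mem_union_left _ (hFmem e he).1)
  have hw1 : ∀ e ∈ F, 0 < w e.2 := fun e he =>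
    hwpos _ (Finset.mem_union_right _ (hFmem e he).2)
  -- positivity of received payloads on edges
  have hp1pos : ∀ e ∈ F, 0 < payload1 F a0 e.2 := by
    intro e he
    rcases lt_or_ge 0 (payload1 F a0 e.2) with h | h
    · exact h
    exfalso
    have h0 : payload1 F a0 e.2 = 0 :=
      le_antisymm h (Finset.sum_nonneg fun f _ => ha0n f)
    have hz : payload1 F a1 e.2 = 0 := by
      refine Finset.sum_eq_zero fun f hf => ?_
      simp only [Finset.mem_filter] at hf
      rw [hpr0.2 f hf.1, hf.2, h0, div_zero]
    have hwj' : payload1 F a1 e.2 = w e.2 :=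
      ha1s _ (hFmem e he).2 ⟨e.1, by rwa [Prod.mk.eta]⟩
    have := hw1 e he
    linarith
  have hp0pos : ∀ e ∈ F, 0 < payload0 F a1 e.1 := by
    intro e he
    rcases lt_or_ge 0 (payload0 F a1 e.1) with h | h
    · exact h
    exfalso
    have h0 : payload0 F a1 e.1 = 0 :=
      le_antisymm h (Finset.sum_nonneg fun f _ => ha1n f)
    have hz : payload0 F a0 e.1 = 0 := by
      refine Finset.sum_eq_zero fun f hf => ?_
      simp only [Finset.mem_filter] at hf
      rw [hpr1.2 f hf.1, hf.2, h0, div_zero]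
    have hwi' : payload0 F a0 e.1 = w e.1 :=
      ha0s _ (hFmem e he).1 ⟨e.2, by rwa [Prod.mk.eta]⟩
    have := hw0 e he
    linarith
  have hσpos : ∀ e ∈ F, 0 < density0 F w a1 e.1 := fun e he =>
    div_pos (hp0pos e he) (hw0 e he)
  have hρpos : ∀ e ∈ F, 0 < density1 F w a0 e.2 := fun e he =>
    div_pos (hp1pos e he) (hw1 e he)
  -- proportional response identities, rewritten with densities
  have h_a1 : ∀ e ∈ F, a1 e = a0 e * density0 F w a1 e.1 := by
    intro e he
    have h := hpr1.2 e he
    have hp := hp0pos e he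
    have hw := hw0 e he
    rw [density0]
    field_simp at h ⊢
    nlinarith [h]
  have h_a0 : ∀ e ∈ F, a0 e = a1 e * density1 F w a0 e.2 := by
    intro e he
    have h := hpr0.2 e he
    have hp := hp1pos e he
    have hw := hw1 e he
    rw [density1]
    field_simp at h ⊢
    nlinarith [h]
  -- on support edges the densities are reciprocal
  have hsupport : ∀ e ∈ F, 0 < a0 e →
      density0 F w a1 e.1 * density1 F w a0 e.2 = 1 := by
    intro e he ha
    have h1 := h_a1 e he
    have h2 := h_a0 e he
    have h3 : a0 e * (density0 F w a1 e.1 * density1 F w a0 e.2) = a0 e * 1 := by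
      rw [mul_one]
      nth_rewrite 2 [h2]
      rw [h1]; ring
    exact mul_left_cancel₀ (ne_of_gt ha) h3
  -- maximin gives the product is ≥ 1 on every edge
  have hge1 : ∀ e ∈ F, 1 ≤ density0 F w a1 e.1 * density1 F w a0 e.2 := by
    intro e he
    have hw1' : payload0 F a0 e.1 = w e.1 :=
      ha0s _ (hFmem e he).1 ⟨e.2, by rwa [Prod.mk.eta]⟩
    have hpos : ∑ f ∈ F.filter (fun f => f.1 = e.1), (0:ℝ) <
        ∑ f ∈ F.filter (fun f => f.1 = e.1), a0 f := by
      rw [Finset.sum_const_zero]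
      have : (0:ℝ) < payload0 F a0 e.1 := by rw [hw1']; exact hw0 e he
      exact this
    obtain ⟨f, hf, hfpos⟩ := Finset.exists_lt_of_sum_lt hpos
    simp only [Finset.mem_filter] at hf
    obtain ⟨hfF, hf1⟩ := hf
    have hs := hsupport f hfF hfpos
    rw [hf1] at hs
    have hmax := hm0 f hfF hfpos e.2 (by rw [hf1, Prod.mk.eta]; exact he)
    have hσ := hσpos e he
    nlinarith
  -- dual variables
  set Y : V → ℝ := fun i => if c0 ≤ c1 * density0 F w a1 i then 1 else 0 with hYdef
  set Z : V → ℝ := fun j => if c1 < c0 * density1 F w a0 j then 1 else 0 with hZdef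
  have hYnn : ∀ i, 0 ≤ Y i := by
    intro i; simp only [hYdef]; split <;> norm_num
  have hZnn : ∀ j, 0 ≤ Z j := by
    intro j; simp only [hZdef]; split <;> norm_num
  have hYle : ∀ i, Y i ≤ 1 := by
    intro i; simp only [hYdef]; split <;> norm_num
  have hZle : ∀ j, Z j ≤ 1 := by
    intro j; simp only [hZdef]; split <;> norm_num
  -- dual feasibility
  have hYZ1 : ∀ e ∈ F, 1 ≤ Y e.1 + Z e.2 := by
    intro e he
    by_cases h : c0 ≤ c1 * density0 F w a1 e.1
    · have hy : Y e.1 = 1 := by simp only [hYdef]; exact if_pos h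
      have := hZnn e.2
      linarith
    · push_neg at h
      have hz : Z e.2 = 1 := by
        simp only [hZdef]
        apply if_pos
        have h1 := hge1 e he
        have h2 := hρpos e he
        have h3 := hσpos e he
        nlinarith [mul_nonneg hc1 (sub_nonneg.2 h1), mul_pos h2 (sub_pos.2 h)]
      have := hYnn e.1
      linarith
  -- nonnegativity of cdot
  have hcnn : ∀ e, 0 ≤ cdot c0 c1 a0 a1 e := fun e =>
    le_min (mul_nonneg hc0 (ha0n e)) (mul_nonneg hc1 (ha1n e))
  -- complementary slackness on edges
  have hcomp : ∀ e ∈ F, cdot c0 c1 a0 a1 e * (Y e.1 + Z e.2) = cdot c0 c1 a0 a1 e := by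
    intro e he
    rcases eq_or_lt_of_le (hcnn e) with h | h
    · rw [← h, zero_mul]
    · have h0 : 0 < c0 * a0 e := lt_of_lt_of_le h (min_le_left _ _)
      have ha0pos : 0 < a0 e := by
        rcases (ha0n e).lt_or_eq with h' | h'
        · exact h'
        · rw [← h', mul_zero] at h0; exact absurd h0 (lt_irrefl 0)
      have hsup := hsupport e he ha0pos
      have hσ := hσpos e he
      have hρ := hρpos e he
      suffices hYZ : Y e.1 + Z e.2 = 1 by rw [hYZ, mul_one]
      by_cases hcnd : c0 ≤ c1 * density0 F w a1 e.1
      · have hy : Y e.1 = 1 := by simp only [hYdef]; exact if_pos hcnd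
        have hz : Z e.2 = 0 := by
          simp only [hZdef]
          apply if_neg
          rw [not_lt]
          nlinarith [mul_le_mul_of_nonneg_right hcnd (le_of_lt hρ)]
        rw [hy, hz]; norm_num
      · have hy : Y e.1 = 0 := by simp only [hYdef]; exact if_neg hcnd
        have hz : Z e.2 = 1 := by
          simp only [hZdef]
          apply if_pos
          push_neg at hcnd
          nlinarith [mul_pos (sub_pos.2 hcnd) hρ]
        rw [hy, hz]; norm_num
  -- tightness at dual-positive vertices
  have hA : ∀ i ∈ I0, Y i * payload0 F (cdot c0 c1 a0 a1) i = Y i * (c0 * w i) := by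
    intro i hi
    by_cases hcond : c0 ≤ c1 * density0 F w a1 i
    · have hYi : Y i = 1 := by simp only [hYdef]; exact if_pos hcond
      rw [hYi, one_mul, one_mul]
      by_cases hnb : ∃ j, (i, j) ∈ F
      · have hkey : ∀ e ∈ F.filter (fun e => e.1 = i),
            cdot c0 c1 a0 a1 e = c0 * a0 e := by
          intro e he'
          simp only [Finset.mem_filter] at he'
          obtain ⟨heF, he1⟩ := he'
          have h1 : a1 e = a0 e * density0 F w a1 i := by
            rw [← he1]; exact h_a1 e heF
          show min (c0 * a0 e) (c1 * a1 e) = c0 * a0 e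
          rw [h1]
          apply min_eq_left
          nlinarith [ha0n e]
        rw [payload0, Finset.sum_congr rfl hkey, ← Finset.mul_sum]
        have : ∑ e ∈ F.filter (fun e => e.1 = i), a0 e = w i := ha0s i hi hnb
        rw [this]
      · have hempty : F.filter (fun e => e.1 = i) = ∅ := by
          rw [Finset.filter_eq_empty_iff]
          intro e heF he1
          exact hnb ⟨e.2, by rw [← he1, Prod.mk.eta]; exact heF⟩
        have hσ0 : density0 F w a1 i = 0 := by
          rw [density0, payload0, hempty, Finset.sum_empty, zero_div]
        rw [hσ0, mul_zero] at hcond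
        have hc00 : c0 = 0 := le_antisymm hcond hc0
        rw [payload0, hempty, Finset.sum_empty, hc00, zero_mul]
    · have : Y i = 0 := by simp only [hYdef]; exact if_neg hcond
      rw [this, zero_mul, zero_mul]
  have hB : ∀ j ∈ I1, Z j * payload1 F (cdot c0 c1 a0 a1) j = Z j * (c1 * w j) := by
    intro j hj
    by_cases hcond : c1 < c0 * density1 F w a0 j
    · have hZj : Z j = 1 := by simp only [hZdef]; exact if_pos hcond
      rw [hZj, one_mul, one_mul]
      by_cases hnb : ∃ i, (i, j) ∈ F
      · have hkey : ∀ e ∈ F.filter (fun e => e.2 = j),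
            cdot c0 c1 a0 a1 e = c1 * a1 e := by
          intro e he'
          simp only [Finset.mem_filter] at he'
          obtain ⟨heF, he2⟩ := he'
          have h1 : a0 e = a1 e * density1 F w a0 j := by
            rw [← he2]; exact h_a0 e heF
          show min (c0 * a0 e) (c1 * a1 e) = c1 * a1 e
          rw [h1]
          apply min_eq_right
          nlinarith [ha1n e]
        rw [payload1, Finset.sum_congr rfl hkey, ← Finset.mul_sum]
        have : ∑ e ∈ F.filter (fun e => e.2 = j), a1 e = w j := ha1s j hj hnb
        rw [this]
      · have hempty : F.filter (fun e => e.2 = j) = ∅ := by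
          rw [Finset.filter_eq_empty_iff]
          intro e heF he2
          exact hnb ⟨e.1, by rw [← he2, Prod.mk.eta]; exact heF⟩
        have hρ0 : density1 F w a0 j = 0 := by
          rw [density1, payload1, hempty, Finset.sum_empty, zero_div]
        rw [hρ0, mul_zero] at hcond
        exact absurd hcond (not_lt.2 hc1)
    · have : Z j = 0 := by simp only [hZdef]; exact if_neg hcond
      rw [this, zero_mul, zero_mul]
  -- value of cdot equals the dual value
  have hval : matchVal F (cdot c0 c1 a0 a1) =
      ∑ i ∈ I0, Y i * (c0 * w i) + ∑ j ∈ I1, Z j * (c1 * w j) := by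
    have e1 : matchVal F (cdot c0 c1 a0 a1) =
        ∑ e ∈ F, cdot c0 c1 a0 a1 e * Y e.1 + ∑ e ∈ F, cdot c0 c1 a0 a1 e * Z e.2 := by
      rw [matchVal, ← Finset.sum_add_distrib]
      refine Finset.sum_congr rfl fun e he => ?_
      rw [← mul_add, hcomp e he]
    rw [e1, fiber_sum0 I0 F (fun e he => (hFmem e he).1),
      fiber_sum1 I1 F (fun e he => (hFmem e he).2),
      Finset.sum_congr rfl hA, Finset.sum_congr rfl hB]
  -- feasibility of cdot
  have hfeas : FeasibleMatching I0 I1 F w c0 c1 (cdot c0 c1 a0 a1) := by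
    refine ⟨hcnn, fun e he => ?_, fun i hi => ?_, fun j hj => ?_⟩
    · show min (c0 * a0 e) (c1 * a1 e) = 0
      rw [ha0z e he, ha1z e he, mul_zero, mul_zero, min_self]
    · calc payload0 F (cdot c0 c1 a0 a1) i
          ≤ ∑ e ∈ F.filter (fun e => e.1 = i), c0 * a0 e :=
            Finset.sum_le_sum fun e _ => min_le_left _ _
        _ = c0 * payload0 F a0 i := by rw [payload0, Finset.mul_sum]
        _ ≤ c0 * w i := by
            apply mul_le_mul_of_nonneg_left _ hc0
            by_cases h : ∃ j, (i, j) ∈ F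
            · exact le_of_eq (ha0s i hi h)
            · have hempty : F.filter (fun e => e.1 = i) = ∅ := by
                rw [Finset.filter_eq_empty_iff]
                intro e heF he1
                exact h ⟨e.2, by rw [← he1, Prod.mk.eta]; exact heF⟩
              rw [payload0, hempty, Finset.sum_empty]
              exact le_of_lt (hwpos _ (Finset.mem_union_left _ hi))
    · calc payload1 F (cdot c0 c1 a0 a1) j
          ≤ ∑ e ∈ F.filter (fun e => e.2 = j), c1 * a1 e :=
            Finset.sum_le_sum fun e _ => min_le_right _ _
        _ = c1 * payload1 F a1 j := by rw [payload1, Finset.mul_sum]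
        _ ≤ c1 * w j := by
            apply mul_le_mul_of_nonneg_left _ hc1
            by_cases h : ∃ i, (i, j) ∈ F
            · exact le_of_eq (ha1s j hj h)
            · have hempty : F.filter (fun e => e.2 = j) = ∅ := by
                rw [Finset.filter_eq_empty_iff]
                intro e heF he2
                exact h ⟨e.1, by rw [← he2, Prod.mk.eta]; exact heF⟩
              rw [payload1, hempty, Finset.sum_empty]
              exact le_of_lt (hwpos _ (Finset.mem_union_right _ hj))
  refine ⟨hfeas, fun x hx => ?_⟩
  obtain ⟨hxn, hxz, hx0, hx1⟩ := hx
  calc matchVal F x = ∑ e ∈ F, x e := rfl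
    _ ≤ ∑ e ∈ F, x e * (Y e.1 + Z e.2) :=
        Finset.sum_le_sum fun e he => le_mul_of_one_le_right (hxn e) (hYZ1 e he)
    _ = ∑ i ∈ I0, Y i * payload0 F x i + ∑ j ∈ I1, Z j * payload1 F x j := by
        rw [← fiber_sum0 I0 F (fun e he => (hFmem e he).1),
          ← fiber_sum1 I1 F (fun e he => (hFmem e he).2), ← Finset.sum_add_distrib]
        exact Finset.sum_congr rfl fun e _ => by ring
    _ ≤ ∑ i ∈ I0, Y i * (c0 * w i) + ∑ j ∈ I1, Z j * (c1 * w j) := by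
        refine add_le_add (Finset.sum_le_sum fun i hi => ?_)
          (Finset.sum_le_sum fun j hj => ?_)
        · exact mul_le_mul_of_nonneg_left (hx0 i hi) (hYnn i)
        · exact mul_le_mul_of_nonneg_left (hx1 j hj) (hZnn j)
    _ = matchVal F (cdot c0 c1 a0 a1) := hval.symm
end

section
/- Let G = (I⁰, I¹; F; w) be an instance and let (α⁰, α¹) be a refinement pair that is locally maximin on both sides and mutually proportional responses. Fix a side ι ∈ {0,1} and let p* and ρ* be the payload and payload-density vectors on side ι induced by the refinement α^ι̅. Then for every pair of nonnegative weights c = (c^ι, c^ι̅), the maximum value of a fractional matching in G^(c) equals Σ_{j∈I^ι} min{c^ι/ρ*(j), c^ι̅}·p*(j), with the convention x/0 = +∞ for x > 0 and 0·(+∞) interpreted via min{+∞, c^ι̅} = c^ι̅. -/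
open Finset

variable {V : Type*} [DecidableEq V]

-- fibering lemmas
lemma sum_fiber_fst (F : Finset (V × V)) (T : Finset V) (g : V × V → ℝ)
    (h : ∀ e ∈ F, e.1 ∈ T) :
    ∑ e ∈ F, g e = ∑ i ∈ T, payload0 F g i :=
  (Finset.sum_fiberwise_of_maps_to h g).symm

lemma sum_fiber_snd (F : Finset (V × V)) (T : Finset V) (g : V × V → ℝ)
    (h : ∀ e ∈ F, e.2 ∈ T) :
    ∑ e ∈ F, g e = ∑ j ∈ T, payload1 F g j :=
  (Finset.sum_fiberwise_of_maps_to h g).symm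

lemma sum_filter_fst (F : Finset (V × V)) (T : Finset V) (g : V × V → ℝ) :
    ∑ e ∈ F.filter (fun e => e.1 ∈ T), g e = ∑ i ∈ T, payload0 F g i := by
  rw [sum_fiber_fst (F.filter (fun e => e.1 ∈ T)) T g (fun e he => (mem_filter.mp he).2)]
  refine Finset.sum_congr rfl fun i hi => ?_
  unfold payload0
  rw [Finset.filter_filter]
  exact Finset.sum_congr (Finset.filter_congr fun e _ => by
    constructor
    · exact fun h => h.2
    · exact fun h => ⟨h ▸ hi, h⟩) (fun _ _ => rfl)

lemma sum_filter_snd (F : Finset (V × V)) (T : Finset V) (g : V × V → ℝ) :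
    ∑ e ∈ F.filter (fun e => e.2 ∈ T), g e = ∑ j ∈ T, payload1 F g j := by
  rw [sum_fiber_snd (F.filter (fun e => e.2 ∈ T)) T g (fun e he => (mem_filter.mp he).2)]
  refine Finset.sum_congr rfl fun j hj => ?_
  unfold payload1
  rw [Finset.filter_filter]
  exact Finset.sum_congr (Finset.filter_congr fun e _ => by
    constructor
    · exact fun h => h.2
    · exact fun h => ⟨h ▸ hj, h⟩) (fun _ _ => rfl)

lemma term_eq (p wj c0 c1 : ℝ) (hp : 0 ≤ p) (hw : 0 < wj) (hc1 : 0 ≤ c1) :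
    min (c1 / (p / wj)) c0 * p = min (c0 * p) (c1 * wj) := by
  rcases eq_or_lt_of_le hp with h | h
  · simp [← h, mul_nonneg hc1 hw.le]
  · have hp0 : p ≠ 0 := ne_of_gt h
    rw [div_div_eq_mul_div, min_mul_of_nonneg _ _ hp,
      div_mul_cancel₀ _ hp0, min_comm]

lemma upper1 (I0 I1 : Finset V) (F : Finset (V × V)) (w : V → ℝ)
    (hG : IsInstance I0 I1 F w) (a0 : V × V → ℝ) (ha0 : IsRefinement0 I0 F w a0)
    (hm0 : LocallyMaximin0 F w a0) (c0 c1 : ℝ) (hc0 : 0 ≤ c0)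
    (x : V × V → ℝ) (hx : FeasibleMatching I0 I1 F w c0 c1 x) :
    matchVal F x ≤ ∑ j ∈ I1, min (c0 * payload1 F a0 j) (c1 * w j) := by
  classical
  obtain ⟨hdisj, hF, hw⟩ := hG
  set S : Finset V := I1.filter (fun j => c0 * payload1 F a0 j < c1 * w j) with hS
  set T : Finset V := I0.filter (fun i => ∃ j ∈ S, (i, j) ∈ F) with hT
  have hTS : ∀ e ∈ F, e.2 ∈ S → e.1 ∈ T := by
    intro e he h2
    exact mem_filter.mpr ⟨(hF e he).1, ⟨e.2, h2, by rwa [Prod.mk.eta]⟩⟩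
  have hvanish : ∀ e ∈ F, e.1 ∈ T → e.2 ∉ S → a0 e = 0 := by
    intro e he h1 h2
    by_contra hne
    have hpos : 0 < a0 e := lt_of_le_of_ne (ha0.1 e) (Ne.symm hne)
    obtain ⟨j', hj'S, hj'F⟩ := (mem_filter.mp h1).2
    have hd := hm0 e he hpos j' hj'F
    have hj'I1 : j' ∈ I1 := (mem_filter.mp hj'S).1
    have hlt : c0 * payload1 F a0 j' < c1 * w j' := (mem_filter.mp hj'S).2
    have hwj' : 0 < w j' := hw j' (mem_union_right _ hj'I1)
    have he2 : e.2 ∈ I1 := (hF e he).2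
    have hwe2 : 0 < w e.2 := hw e.2 (mem_union_right _ he2)
    apply h2
    refine mem_filter.mpr ⟨he2, ?_⟩
    unfold density1 at hd
    have h1' : c0 * (payload1 F a0 e.2 / w e.2) ≤ c0 * (payload1 F a0 j' / w j') :=
      mul_le_mul_of_nonneg_left hd hc0
    have h2' : c0 * (payload1 F a0 j' / w j') < c1 := by
      rw [mul_div_assoc']
      exact (div_lt_iff₀ hwj').mpr hlt
    have h3' : c0 * (payload1 F a0 e.2 / w e.2) < c1 := lt_of_le_of_lt h1' h2'
    calc c0 * payload1 F a0 e.2 = c0 * (payload1 F a0 e.2 / w e.2) * w e.2 := by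
          field_simp
      _ < c1 * w e.2 := mul_lt_mul_of_pos_right h3' hwe2
  have hxnn := hx.1
  have hA : ∑ e ∈ F.filter (fun e => e.2 ∈ S), x e ≤ ∑ i ∈ T, (c0 * w i) := by
    have hsub : F.filter (fun e => e.2 ∈ S) ⊆ F.filter (fun e => e.1 ∈ T) := by
      intro e he; obtain ⟨heF, heS⟩ := mem_filter.mp he
      exact mem_filter.mpr ⟨heF, hTS e heF heS⟩
    calc ∑ e ∈ F.filter (fun e => e.2 ∈ S), x e
        ≤ ∑ e ∈ F.filter (fun e => e.1 ∈ T), x e :=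
          Finset.sum_le_sum_of_subset_of_nonneg hsub (fun e _ _ => hxnn e)
      _ = ∑ i ∈ T, payload0 F x i := sum_filter_fst F T x
      _ ≤ ∑ i ∈ T, c0 * w i :=
          Finset.sum_le_sum (fun i hi => hx.2.2.1 i (mem_filter.mp hi).1)
  have hAT : ∑ i ∈ T, (c0 * w i) ≤ ∑ j ∈ S, c0 * payload1 F a0 j := by
    have h1 : ∑ i ∈ T, w i ≤ ∑ j ∈ S, payload1 F a0 j := by
      have e1 : ∑ i ∈ T, w i = ∑ e ∈ F.filter (fun e => e.1 ∈ T), a0 e := by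
        rw [sum_filter_fst F T a0]
        refine Finset.sum_congr rfl fun i hi => ?_
        obtain ⟨hiI0, j', hj'S, hj'F⟩ := mem_filter.mp hi
        exact (ha0.2.2 i hiI0 ⟨j', hj'F⟩).symm
      have e2 : ∑ e ∈ F.filter (fun e => e.1 ∈ T), a0 e
          = ∑ e ∈ F.filter (fun e => e.1 ∈ T ∧ e.2 ∈ S), a0 e := by
        refine (Finset.sum_subset ?_ ?_).symm
        · intro e he; obtain ⟨heF, h⟩ := mem_filter.mp he
          exact mem_filter.mpr ⟨heF, h.1⟩
        · intro e he hne
          obtain ⟨heF, hT'⟩ := mem_filter.mp he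
          have hns : e.2 ∉ S := fun hS' => hne (mem_filter.mpr ⟨heF, hT', hS'⟩)
          exact hvanish e heF hT' hns
      have e3 : ∑ e ∈ F.filter (fun e => e.1 ∈ T ∧ e.2 ∈ S), a0 e
          ≤ ∑ e ∈ F.filter (fun e => e.2 ∈ S), a0 e := by
        refine Finset.sum_le_sum_of_subset_of_nonneg ?_ (fun e _ _ => ha0.1 e)
        intro e he; obtain ⟨heF, h⟩ := mem_filter.mp he
        exact mem_filter.mpr ⟨heF, h.2⟩
      rw [e1, e2]
      calc ∑ e ∈ F.filter (fun e => e.1 ∈ T ∧ e.2 ∈ S), a0 e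
          ≤ ∑ e ∈ F.filter (fun e => e.2 ∈ S), a0 e := e3
        _ = ∑ j ∈ S, payload1 F a0 j := sum_filter_snd F S a0
    calc ∑ i ∈ T, c0 * w i = c0 * ∑ i ∈ T, w i := (Finset.mul_sum _ _ _).symm
      _ ≤ c0 * ∑ j ∈ S, payload1 F a0 j := mul_le_mul_of_nonneg_left h1 hc0
      _ = ∑ j ∈ S, c0 * payload1 F a0 j := Finset.mul_sum _ _ _
  have hB : ∑ e ∈ F.filter (fun e => ¬ e.2 ∈ S), x e
      ≤ ∑ j ∈ I1.filter (fun j => ¬ (c0 * payload1 F a0 j < c1 * w j)), c1 * w j := by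
    have hfe : F.filter (fun e => ¬ e.2 ∈ S)
        = F.filter (fun e => e.2 ∈ I1.filter (fun j => ¬ (c0 * payload1 F a0 j < c1 * w j))) := by
      refine Finset.filter_congr fun e he => ?_
      have he2 : e.2 ∈ I1 := (hF e he).2
      simp only [hS, mem_filter]
      tauto
    rw [hfe, sum_filter_snd]
    refine Finset.sum_le_sum fun j hj => hx.2.2.2 j (mem_filter.mp hj).1
  calc matchVal F x
      = (∑ e ∈ F.filter (fun e => e.2 ∈ S), x e)
        + ∑ e ∈ F.filter (fun e => ¬ e.2 ∈ S), x e :=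
        (Finset.sum_filter_add_sum_filter_not F _ x).symm
    _ ≤ (∑ j ∈ S, c0 * payload1 F a0 j)
        + ∑ j ∈ I1.filter (fun j => ¬ (c0 * payload1 F a0 j < c1 * w j)), c1 * w j :=
        add_le_add (le_trans hA hAT) hB
    _ = (∑ j ∈ S, min (c0 * payload1 F a0 j) (c1 * w j))
        + ∑ j ∈ I1.filter (fun j => ¬ (c0 * payload1 F a0 j < c1 * w j)),
            min (c0 * payload1 F a0 j) (c1 * w j) := by
        congr 1
        · exact Finset.sum_congr rfl fun j hj =>
            (min_eq_left (le_of_lt (mem_filter.mp hj).2)).symm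
        · exact Finset.sum_congr rfl fun j hj =>
            (min_eq_right (not_lt.mp (mem_filter.mp hj).2)).symm
    _ = ∑ j ∈ I1, min (c0 * payload1 F a0 j) (c1 * w j) :=
        Finset.sum_filter_add_sum_filter_not I1 _ _

lemma upper0 (I0 I1 : Finset V) (F : Finset (V × V)) (w : V → ℝ)
    (hG : IsInstance I0 I1 F w) (a1 : V × V → ℝ) (ha1 : IsRefinement1 I1 F w a1)
    (hm1 : LocallyMaximin1 F w a1) (c0 c1 : ℝ) (hc1 : 0 ≤ c1)
    (x : V × V → ℝ) (hx : FeasibleMatching I0 I1 F w c0 c1 x) :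
    matchVal F x ≤ ∑ i ∈ I0, min (c1 * payload0 F a1 i) (c0 * w i) := by
  classical
  obtain ⟨hdisj, hF, hw⟩ := hG
  set S : Finset V := I0.filter (fun i => c1 * payload0 F a1 i < c0 * w i) with hS
  set T : Finset V := I1.filter (fun j => ∃ i ∈ S, (i, j) ∈ F) with hT
  have hTS : ∀ e ∈ F, e.1 ∈ S → e.2 ∈ T := by
    intro e he h2
    exact mem_filter.mpr ⟨(hF e he).2, ⟨e.1, h2, by rwa [Prod.mk.eta]⟩⟩
  have hvanish : ∀ e ∈ F, e.2 ∈ T → e.1 ∉ S → a1 e = 0 := by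
    intro e he h1 h2
    by_contra hne
    have hpos : 0 < a1 e := lt_of_le_of_ne (ha1.1 e) (Ne.symm hne)
    obtain ⟨i', hi'S, hi'F⟩ := (mem_filter.mp h1).2
    have hd := hm1 e he hpos i' hi'F
    have hi'I0 : i' ∈ I0 := (mem_filter.mp hi'S).1
    have hlt : c1 * payload0 F a1 i' < c0 * w i' := (mem_filter.mp hi'S).2
    have hwi' : 0 < w i' := hw i' (mem_union_left _ hi'I0)
    have he1 : e.1 ∈ I0 := (hF e he).1
    have hwe1 : 0 < w e.1 := hw e.1 (mem_union_left _ he1)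
    apply h2
    refine mem_filter.mpr ⟨he1, ?_⟩
    unfold density0 at hd
    have h1' : c1 * (payload0 F a1 e.1 / w e.1) ≤ c1 * (payload0 F a1 i' / w i') :=
      mul_le_mul_of_nonneg_left hd hc1
    have h2' : c1 * (payload0 F a1 i' / w i') < c0 := by
      rw [mul_div_assoc']
      exact (div_lt_iff₀ hwi').mpr hlt
    have h3' : c1 * (payload0 F a1 e.1 / w e.1) < c0 := lt_of_le_of_lt h1' h2'
    calc c1 * payload0 F a1 e.1 = c1 * (payload0 F a1 e.1 / w e.1) * w e.1 := by
          field_simp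
      _ < c0 * w e.1 := mul_lt_mul_of_pos_right h3' hwe1
  have hxnn := hx.1
  have hA : ∑ e ∈ F.filter (fun e => e.1 ∈ S), x e ≤ ∑ j ∈ T, (c1 * w j) := by
    have hsub : F.filter (fun e => e.1 ∈ S) ⊆ F.filter (fun e => e.2 ∈ T) := by
      intro e he; obtain ⟨heF, heS⟩ := mem_filter.mp he
      exact mem_filter.mpr ⟨heF, hTS e heF heS⟩
    calc ∑ e ∈ F.filter (fun e => e.1 ∈ S), x e
        ≤ ∑ e ∈ F.filter (fun e => e.2 ∈ T), x e :=
          Finset.sum_le_sum_of_subset_of_nonneg hsub (fun e _ _ => hxnn e)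
      _ = ∑ j ∈ T, payload1 F x j := sum_filter_snd F T x
      _ ≤ ∑ j ∈ T, c1 * w j :=
          Finset.sum_le_sum (fun j hj => hx.2.2.2 j (mem_filter.mp hj).1)
  have hAT : ∑ j ∈ T, (c1 * w j) ≤ ∑ i ∈ S, c1 * payload0 F a1 i := by
    have h1 : ∑ j ∈ T, w j ≤ ∑ i ∈ S, payload0 F a1 i := by
      have e1 : ∑ j ∈ T, w j = ∑ e ∈ F.filter (fun e => e.2 ∈ T), a1 e := by
        rw [sum_filter_snd F T a1]
        refine Finset.sum_congr rfl fun j hj => ?_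
        obtain ⟨hjI1, i', hi'S, hi'F⟩ := mem_filter.mp hj
        exact (ha1.2.2 j hjI1 ⟨i', hi'F⟩).symm
      have e2 : ∑ e ∈ F.filter (fun e => e.2 ∈ T), a1 e
          = ∑ e ∈ F.filter (fun e => e.2 ∈ T ∧ e.1 ∈ S), a1 e := by
        refine (Finset.sum_subset ?_ ?_).symm
        · intro e he; obtain ⟨heF, h⟩ := mem_filter.mp he
          exact mem_filter.mpr ⟨heF, h.1⟩
        · intro e he hne
          obtain ⟨heF, hT'⟩ := mem_filter.mp he
          have hns : e.1 ∉ S := fun hS' => hne (mem_filter.mpr ⟨heF, hT', hS'⟩)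
          exact hvanish e heF hT' hns
      have e3 : ∑ e ∈ F.filter (fun e => e.2 ∈ T ∧ e.1 ∈ S), a1 e
          ≤ ∑ e ∈ F.filter (fun e => e.1 ∈ S), a1 e := by
        refine Finset.sum_le_sum_of_subset_of_nonneg ?_ (fun e _ _ => ha1.1 e)
        intro e he; obtain ⟨heF, h⟩ := mem_filter.mp he
        exact mem_filter.mpr ⟨heF, h.2⟩
      rw [e1, e2]
      calc ∑ e ∈ F.filter (fun e => e.2 ∈ T ∧ e.1 ∈ S), a1 e
          ≤ ∑ e ∈ F.filter (fun e => e.1 ∈ S), a1 e := e3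
        _ = ∑ i ∈ S, payload0 F a1 i := sum_filter_fst F S a1
    calc ∑ j ∈ T, c1 * w j = c1 * ∑ j ∈ T, w j := (Finset.mul_sum _ _ _).symm
      _ ≤ c1 * ∑ i ∈ S, payload0 F a1 i := mul_le_mul_of_nonneg_left h1 hc1
      _ = ∑ i ∈ S, c1 * payload0 F a1 i := Finset.mul_sum _ _ _
  have hB : ∑ e ∈ F.filter (fun e => ¬ e.1 ∈ S), x e
      ≤ ∑ i ∈ I0.filter (fun i => ¬ (c1 * payload0 F a1 i < c0 * w i)), c0 * w i := by
    have hfe : F.filter (fun e => ¬ e.1 ∈ S)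
        = F.filter (fun e => e.1 ∈ I0.filter (fun i => ¬ (c1 * payload0 F a1 i < c0 * w i))) := by
      refine Finset.filter_congr fun e he => ?_
      have he1 : e.1 ∈ I0 := (hF e he).1
      simp only [hS, mem_filter]
      tauto
    rw [hfe, sum_filter_fst]
    refine Finset.sum_le_sum fun i hi => hx.2.2.1 i (mem_filter.mp hi).1
  calc matchVal F x
      = (∑ e ∈ F.filter (fun e => e.1 ∈ S), x e)
        + ∑ e ∈ F.filter (fun e => ¬ e.1 ∈ S), x e :=
        (Finset.sum_filter_add_sum_filter_not F _ x).symm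
    _ ≤ (∑ i ∈ S, c1 * payload0 F a1 i)
        + ∑ i ∈ I0.filter (fun i => ¬ (c1 * payload0 F a1 i < c0 * w i)), c0 * w i :=
        add_le_add (le_trans hA hAT) hB
    _ = (∑ i ∈ S, min (c1 * payload0 F a1 i) (c0 * w i))
        + ∑ i ∈ I0.filter (fun i => ¬ (c1 * payload0 F a1 i < c0 * w i)),
            min (c1 * payload0 F a1 i) (c0 * w i) := by
        congr 1
        · exact Finset.sum_congr rfl fun i hi =>
            (min_eq_left (le_of_lt (mem_filter.mp hi).2)).symm
        · exact Finset.sum_congr rfl fun i hi =>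
            (min_eq_right (not_lt.mp (mem_filter.mp hi).2)).symm
    _ = ∑ i ∈ I0, min (c1 * payload0 F a1 i) (c0 * w i) :=
        Finset.sum_filter_add_sum_filter_not I0 _ _

lemma feas_cdot (I0 I1 : Finset V) (F : Finset (V × V)) (w : V → ℝ)
    (hG : IsInstance I0 I1 F w) (a0 a1 : V × V → ℝ)
    (ha0 : IsRefinement0 I0 F w a0) (ha1 : IsRefinement1 I1 F w a1)
    (c0 c1 : ℝ) (hc0 : 0 ≤ c0) (hc1 : 0 ≤ c1) :
    FeasibleMatching I0 I1 F w c0 c1 (cdot c0 c1 a0 a1) := by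
  obtain ⟨hdisj, hF, hw⟩ := hG
  refine ⟨fun e => le_min (mul_nonneg hc0 (ha0.1 e)) (mul_nonneg hc1 (ha1.1 e)),
    fun e he => by simp [cdot, ha0.2.1 e he, ha1.2.1 e he], ?_, ?_⟩
  · intro i hi
    have h1 : payload0 F (cdot c0 c1 a0 a1) i ≤ c0 * payload0 F a0 i := by
      unfold payload0
      rw [Finset.mul_sum]
      exact Finset.sum_le_sum fun e _ => min_le_left _ _
    have h2 : payload0 F a0 i ≤ w i := by
      by_cases hne : ∃ j, (i, j) ∈ F
      · exact le_of_eq (ha0.2.2 i hi hne)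
      · have : F.filter (fun e => e.1 = i) = ∅ := by
          refine Finset.filter_eq_empty_iff.mpr fun e he h => hne ⟨e.2, by rwa [← h, Prod.mk.eta]⟩
        unfold payload0
        rw [this, Finset.sum_empty]
        exact (hw i (mem_union_left _ hi)).le
    exact le_trans h1 (mul_le_mul_of_nonneg_left h2 hc0)
  · intro j hj
    have h1 : payload1 F (cdot c0 c1 a0 a1) j ≤ c1 * payload1 F a1 j := by
      unfold payload1
      rw [Finset.mul_sum]
      exact Finset.sum_le_sum fun e _ => min_le_right _ _
    have h2 : payload1 F a1 j ≤ w j := by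
      by_cases hne : ∃ i, (i, j) ∈ F
      · exact le_of_eq (ha1.2.2 j hj hne)
      · have : F.filter (fun e => e.2 = j) = ∅ := by
          refine Finset.filter_eq_empty_iff.mpr fun e he h => hne ⟨e.1, by rwa [← h, Prod.mk.eta]⟩
        unfold payload1
        rw [this, Finset.sum_empty]
        exact (hw j (mem_union_right _ hj)).le
    exact le_trans h1 (mul_le_mul_of_nonneg_left h2 hc1)

lemma val1_cdot (I0 I1 : Finset V) (F : Finset (V × V)) (w : V → ℝ)
    (hG : IsInstance I0 I1 F w) (a0 a1 : V × V → ℝ)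
    (ha0 : IsRefinement0 I0 F w a0)
    (hpr0 : IsPropRespOf0 F w a0 a1)
    (c0 c1 : ℝ) (hc1 : 0 ≤ c1) :
    matchVal F (cdot c0 c1 a0 a1) = ∑ j ∈ I1, min (c0 * payload1 F a0 j) (c1 * w j) := by
  obtain ⟨hdisj, hF, hw⟩ := hG
  rw [matchVal, sum_fiber_snd F I1 _ (fun e he => (hF e he).2)]
  refine Finset.sum_congr rfl fun j hj => ?_
  have hwj : 0 < w j := hw j (mem_union_right _ hj)
  have hPnn : 0 ≤ payload1 F a0 j := Finset.sum_nonneg fun e _ => ha0.1 e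
  have hstep : payload1 F (cdot c0 c1 a0 a1) j
      = payload1 F a0 j * min c0 (c1 * w j / payload1 F a0 j) := by
    calc payload1 F (cdot c0 c1 a0 a1) j
        = ∑ e ∈ F.filter (fun e => e.2 = j), a0 e * min c0 (c1 * w j / payload1 F a0 j) := by
          refine Finset.sum_congr rfl fun e he => ?_
          obtain ⟨heF, he2⟩ := mem_filter.mp he
          have ha1e : a1 e = a0 e * w j / payload1 F a0 j := by
            rw [← he2]; exact hpr0.2 e heF
          show min (c0 * a0 e) (c1 * a1 e) = _
          have h2 : c1 * a1 e = a0 e * (c1 * w j / payload1 F a0 j) := by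
            rw [ha1e]; ring
          rw [h2, mul_comm c0 (a0 e), ← mul_min_of_nonneg _ _ (ha0.1 e)]
      _ = payload1 F a0 j * min c0 (c1 * w j / payload1 F a0 j) := by
          rw [← Finset.sum_mul]; rfl
  rw [hstep]
  rcases eq_or_lt_of_le hPnn with hP0 | hPpos
  · rw [← hP0]
    simp [min_eq_left (mul_nonneg hc1 hwj.le)]
  · rw [mul_min_of_nonneg _ _ hPnn, mul_comm (payload1 F a0 j) c0,
      mul_comm (payload1 F a0 j), div_mul_cancel₀ _ (ne_of_gt hPpos)]

lemma val0_cdot (I0 I1 : Finset V) (F : Finset (V × V)) (w : V → ℝ)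
    (hG : IsInstance I0 I1 F w) (a0 a1 : V × V → ℝ)
    (ha1 : IsRefinement1 I1 F w a1)
    (hpr1 : IsPropRespOf1 F w a1 a0)
    (c0 c1 : ℝ) (hc0 : 0 ≤ c0) :
    matchVal F (cdot c0 c1 a0 a1) = ∑ i ∈ I0, min (c1 * payload0 F a1 i) (c0 * w i) := by
  obtain ⟨hdisj, hF, hw⟩ := hG
  rw [matchVal, sum_fiber_fst F I0 _ (fun e he => (hF e he).1)]
  refine Finset.sum_congr rfl fun i hi => ?_
  have hwi : 0 < w i := hw i (mem_union_left _ hi)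
  have hPnn : 0 ≤ payload0 F a1 i := Finset.sum_nonneg fun e _ => ha1.1 e
  have hstep : payload0 F (cdot c0 c1 a0 a1) i
      = payload0 F a1 i * min (c0 * w i / payload0 F a1 i) c1 := by
    calc payload0 F (cdot c0 c1 a0 a1) i
        = ∑ e ∈ F.filter (fun e => e.1 = i), a1 e * min (c0 * w i / payload0 F a1 i) c1 := by
          refine Finset.sum_congr rfl fun e he => ?_
          obtain ⟨heF, he1⟩ := mem_filter.mp he
          have ha0e : a0 e = a1 e * w i / payload0 F a1 i := by
            rw [← he1]; exact hpr1.2 e heF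
          show min (c0 * a0 e) (c1 * a1 e) = _
          have h2 : c0 * a0 e = a1 e * (c0 * w i / payload0 F a1 i) := by
            rw [ha0e]; ring
          rw [h2, mul_comm c1 (a1 e), ← mul_min_of_nonneg _ _ (ha1.1 e)]
      _ = payload0 F a1 i * min (c0 * w i / payload0 F a1 i) c1 := by
          rw [← Finset.sum_mul]; rfl
  rw [hstep]
  rcases eq_or_lt_of_le hPnn with hP0 | hPpos
  · rw [← hP0]
    simp [min_eq_left (mul_nonneg hc0 hwi.le)]
  · rw [mul_min_of_nonneg _ _ hPnn, mul_comm (payload0 F a1 i) c1,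
      mul_comm (payload0 F a1 i), div_mul_cancel₀ _ (ne_of_gt hPpos), min_comm]

/-- **Value of the universal maximum matching.**
For a locally maximin, mutually proportional-response refinement pair `(a0, a1)`, and for
every pair of nonnegative weights `c = (c0, c1)`, the maximum value of a fractional matching
in `G^(c)` equals `Σ_{j ∈ I^ι} min{c^ι/ρ*(j), c^ι̅}·p*(j)`, where `p*`, `ρ*` are the payload
and payload-density vectors on side `ι` induced by `α^ι̅`.  (Both choices of the side `ι` are
stated; when `ρ*(j) = 0` the payload `p*(j)` is `0` as well, so the real-division formula
agrees with the convention `min{x/0, c} = c`.) -/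
theorem maximum_matching_value_formula
    (I0 I1 : Finset V) (F : Finset (V × V)) (w : V → ℝ)
    (hG : IsInstance I0 I1 F w)
    (a0 a1 : V × V → ℝ)
    (ha0 : IsRefinement0 I0 F w a0) (ha1 : IsRefinement1 I1 F w a1)
    (hm0 : LocallyMaximin0 F w a0) (hm1 : LocallyMaximin1 F w a1)
    (hpr0 : IsPropRespOf0 F w a0 a1) (hpr1 : IsPropRespOf1 F w a1 a0)
    (c0 c1 : ℝ) (hc0 : 0 ≤ c0) (hc1 : 0 ≤ c1) :
    IsGreatest {v : ℝ | ∃ x, FeasibleMatching I0 I1 F w c0 c1 x ∧ matchVal F x = v}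
      (∑ j ∈ I1, min (c1 / density1 F w a0 j) c0 * payload1 F a0 j) ∧
    IsGreatest {v : ℝ | ∃ x, FeasibleMatching I0 I1 F w c0 c1 x ∧ matchVal F x = v}
      (∑ i ∈ I0, min (c0 / density0 F w a1 i) c1 * payload0 F a1 i) := by
  have hrw1 : ∑ j ∈ I1, min (c1 / density1 F w a0 j) c0 * payload1 F a0 j
      = ∑ j ∈ I1, min (c0 * payload1 F a0 j) (c1 * w j) := by
    refine Finset.sum_congr rfl fun j hj => ?_
    have hwj : 0 < w j := hG.2.2 j (mem_union_right _ hj)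
    have hPnn : 0 ≤ payload1 F a0 j := Finset.sum_nonneg fun e _ => ha0.1 e
    exact term_eq _ _ _ _ hPnn hwj hc1
  have hrw0 : ∑ i ∈ I0, min (c0 / density0 F w a1 i) c1 * payload0 F a1 i
      = ∑ i ∈ I0, min (c1 * payload0 F a1 i) (c0 * w i) := by
    refine Finset.sum_congr rfl fun i hi => ?_
    have hwi : 0 < w i := hG.2.2 i (mem_union_left _ hi)
    have hPnn : 0 ≤ payload0 F a1 i := Finset.sum_nonneg fun e _ => ha1.1 e
    exact term_eq _ _ _ _ hPnn hwi hc0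
  rw [hrw1, hrw0]
  constructor
  · constructor
    · exact ⟨cdot c0 c1 a0 a1, feas_cdot I0 I1 F w hG a0 a1 ha0 ha1 c0 c1 hc0 hc1,
        val1_cdot I0 I1 F w hG a0 a1 ha0 hpr0 c0 c1 hc1⟩
    · rintro v ⟨x, hx, rfl⟩
      exact upper1 I0 I1 F w hG a0 ha0 hm0 c0 c1 hc0 x hx
  · constructor
    · exact ⟨cdot c0 c1 a0 a1, feas_cdot I0 I1 F w hG a0 a1 ha0 ha1 c0 c1 hc0 hc1,
        val0_cdot I0 I1 F w hG a0 a1 ha1 hpr1 c0 c1 hc0⟩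
    · rintro v ⟨x, hx, rfl⟩
      exact upper0 I0 I1 F w hG a1 ha1 hm1 c0 c1 hc1 x hx
end

section
/- Let G = (I⁰, I¹; F; w) be a distribution instance and let (α⁰, α¹) be a refinement pair that is locally maximin on both sides and mutually proportional responses. Then for every γ ≥ 0 and every refinement pair (β⁰, β¹) of G, D_γ(α⁰‖α¹) ≤ D_γ(β⁰‖β¹); i.e., (α⁰, α¹) is simultaneously a closest refinement pair for every hockey-stick divergence. -/
open Finset

variable {V : Type*} [DecidableEq V]

/-- A distribution instance: an instance where every vertex has at least one neighbour
and the vertex weights on each side sum to 1. -/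
def IsDistInstance (I0 I1 : Finset V) (F : Finset (V × V)) (w : V → ℝ) : Prop :=
  IsInstance I0 I1 F w ∧
    (∀ i ∈ I0, ∃ j, (i, j) ∈ F) ∧ (∀ j ∈ I1, ∃ i, (i, j) ∈ F) ∧
    (∑ i ∈ I0, w i = 1) ∧ (∑ j ∈ I1, w j = 1)

/-- Hockey-stick divergence `D_γ(P ‖ Q) = max_{S ⊆ F} (Q(S) - γ·P(S))`. -/
noncomputable def hsDiv (F : Finset (V × V)) (γ : ℝ) (P Q : V × V → ℝ) : ℝ :=
  F.powerset.sup' ⟨∅, Finset.empty_mem_powerset F⟩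
    (fun S => (∑ e ∈ S, Q e) - γ * ∑ e ∈ S, P e)

/-- **A locally maximin pair is universally closest for all hockey-stick divergences.**
In a distribution instance, if the refinement pair `(a0, a1)` is locally maximin on both
sides and the two refinements are proportional responses to each other, then for every
`γ ≥ 0` and every refinement pair `(b0, b1)` we have `D_γ(a0 ‖ a1) ≤ D_γ(b0 ‖ b1)`. -/
theorem locally_maximin_pair_closest_for_hockey_stick
    (I0 I1 : Finset V) (F : Finset (V × V)) (w : V → ℝ)
    (hG : IsDistInstance I0 I1 F w)
    (a0 a1 : V × V → ℝ)
    (ha0 : IsRefinement0 I0 F w a0) (ha1 : IsRefinement1 I1 F w a1)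
    (hm0 : LocallyMaximin0 F w a0) (hm1 : LocallyMaximin1 F w a1)
    (hpr0 : IsPropRespOf0 F w a0 a1) (hpr1 : IsPropRespOf1 F w a1 a0)
    (γ : ℝ) (hγ : 0 ≤ γ) :
    ∀ b0 b1 : V × V → ℝ, IsRefinement0 I0 F w b0 → IsRefinement1 I1 F w b1 →
      hsDiv F γ a0 a1 ≤ hsDiv F γ b0 b1 := by
  classical
  intro b0 b1 hb0 hb1
  obtain ⟨⟨_hdisj, hedge, hwpos⟩, hnbr0, hnbr1, _hsum0, _hsum1⟩ := hG
  have hw1 : ∀ j ∈ I1, 0 < w j := fun j hj => hwpos j (Finset.mem_union_right _ hj)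
  have hw0 : ∀ i ∈ I0, 0 < w i := fun i hi => hwpos i (Finset.mem_union_left _ hi)
  -- the a0-payload at every side-1 vertex is positive
  have ppos : ∀ j ∈ I1, 0 < payload1 F a0 j := by
    intro j hj
    rcases (Finset.sum_nonneg (fun e _ => ha0.1 e) :
        (0:ℝ) ≤ payload1 F a0 j).lt_or_eq with h | h
    · exact h
    · exfalso
      have hz : payload1 F a1 j = 0 := by
        apply Finset.sum_eq_zero
        intro e he
        rw [Finset.mem_filter] at he
        have h' : payload1 F a0 j = 0 := h.symm
        rw [hpr0.2 e he.1, he.2, h', div_zero]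
      have h1 : payload1 F a1 j = w j := ha1.2.2 j hj (hnbr1 j hj)
      have h2 := hw1 j hj
      rw [hz] at h1
      linarith
  set Q : V → Prop := fun j => γ * payload1 F a0 j < w j with hQdef
  set E : Finset (V × V) := F.filter (fun e => Q e.2) with hEdef
  have hEF : E ⊆ F := Finset.filter_subset _ _
  -- difference formula on edges
  have hker : ∀ e ∈ F, a1 e - γ * a0 e
      = a0 e * (w e.2 - γ * payload1 F a0 e.2) / payload1 F a0 e.2 := by
    intro e he
    have hp := (ppos e.2 (hedge e he).2).ne'
    rw [hpr0.2 e he]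
    field_simp
  have hfpos : ∀ e ∈ E, 0 ≤ a1 e - γ * a0 e := by
    intro e he
    rw [Finset.mem_filter] at he
    rw [hker e he.1]
    have hq : γ * payload1 F a0 e.2 < w e.2 := he.2
    exact div_nonneg (mul_nonneg (ha0.1 e) (by linarith)) (ppos e.2 (hedge e he.1).2).le
  have hfneg : ∀ e ∈ F, e ∉ E → a1 e - γ * a0 e ≤ 0 := by
    intro e he heE
    have hq : ¬ Q e.2 := by
      intro h; exact heE (Finset.mem_filter.mpr ⟨he, h⟩)
    have hq' : w e.2 ≤ γ * payload1 F a0 e.2 := not_lt.mp hq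
    rw [hker e he]
    apply div_nonpos_of_nonpos_of_nonneg _ (ppos e.2 (hedge e he).2).le
    exact mul_nonpos_of_nonneg_of_nonpos (ha0.1 e) (by linarith)
  -- E is optimal for (a0, a1)
  have hopt : ∀ S ∈ F.powerset,
      (∑ e ∈ S, a1 e) - γ * ∑ e ∈ S, a0 e ≤ (∑ e ∈ E, a1 e) - γ * ∑ e ∈ E, a0 e := by
    intro S hS
    rw [Finset.mem_powerset] at hS
    have hrw : ∀ S' : Finset (V × V), (∑ e ∈ S', a1 e) - γ * ∑ e ∈ S', a0 e
        = ∑ e ∈ S', (a1 e - γ * a0 e) := by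
      intro S'; rw [Finset.sum_sub_distrib, Finset.mul_sum]
    rw [hrw, hrw]
    calc ∑ e ∈ S, (a1 e - γ * a0 e)
        ≤ ∑ e ∈ S ∩ E, (a1 e - γ * a0 e) := by
          rw [← Finset.sum_inter_add_sum_sdiff S E (fun e => a1 e - γ * a0 e)]
          have : ∑ e ∈ S \ E, (a1 e - γ * a0 e) ≤ 0 := by
            apply Finset.sum_nonpos
            intro e he
            rw [Finset.mem_sdiff] at he
            exact hfneg e (hS he.1) he.2
          linarith
      _ ≤ ∑ e ∈ E, (a1 e - γ * a0 e) := by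
          apply Finset.sum_le_sum_of_subset_of_nonneg Finset.inter_subset_right
          intro e heE _
          exact hfpos e heE
  -- side-1 fiberwise sums over E
  set J : Finset V := I1.filter Q with hJdef
  have hfib1 : ∀ c : V × V → ℝ, ∑ e ∈ E, c e = ∑ j ∈ J, payload1 F c j := by
    intro c
    have hmaps : ∀ e ∈ E, e.2 ∈ J := by
      intro e he
      rw [Finset.mem_filter] at he
      exact Finset.mem_filter.mpr ⟨(hedge e he.1).2, he.2⟩
    rw [← Finset.sum_fiberwise_of_maps_to hmaps c]
    apply Finset.sum_congr rfl
    intro j hj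
    rw [Finset.mem_filter] at hj
    apply Finset.sum_congr _ (fun _ _ => rfl)
    ext e
    simp only [hEdef, Finset.mem_filter, and_assoc]
    constructor
    · rintro ⟨h1, _, h3⟩; exact ⟨h1, h3⟩
    · rintro ⟨h1, h3⟩; exact ⟨h1, by rw [h3]; exact hj.2, h3⟩
  have hE1a : ∑ e ∈ E, a1 e = ∑ j ∈ J, w j := by
    rw [hfib1 a1]
    apply Finset.sum_congr rfl
    intro j hj
    rw [Finset.mem_filter] at hj
    exact ha1.2.2 j hj.1 (hnbr1 j hj.1)
  have hE1b : ∑ e ∈ E, b1 e = ∑ j ∈ J, w j := by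
    rw [hfib1 b1]
    apply Finset.sum_congr rfl
    intro j hj
    rw [Finset.mem_filter] at hj
    exact hb1.2.2 j hj.1 (hnbr1 j hj.1)
  -- side-0 comparison over E
  have hfib0 : ∀ c : V × V → ℝ,
      ∑ e ∈ E, c e = ∑ i ∈ I0, ∑ e ∈ E.filter (fun e => e.1 = i), c e := by
    intro c
    have hmaps : ∀ e ∈ E, e.1 ∈ I0 := fun e he => (hedge e (hEF he)).1
    rw [← Finset.sum_fiberwise_of_maps_to hmaps c]
  have hE0 : ∑ e ∈ E, b0 e ≤ ∑ e ∈ E, a0 e := by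
    rw [hfib0 a0, hfib0 b0]
    apply Finset.sum_le_sum
    intro i hi
    by_cases hex : ∃ j, (i, j) ∈ F ∧ Q j
    · obtain ⟨j0, hj0F, hj0Q⟩ := hex
      have hj0I : j0 ∈ I1 := (hedge _ hj0F).2
      -- a0 puts all mass from i inside E
      have ha0full : ∑ e ∈ E.filter (fun e => e.1 = i), a0 e
          = ∑ e ∈ F.filter (fun e => e.1 = i), a0 e := by
        apply Finset.sum_subset
        · intro e he
          rw [Finset.mem_filter] at he ⊢
          exact ⟨hEF he.1, he.2⟩
        · intro e heF heE
          rw [Finset.mem_filter] at heF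
          by_contra hne
          have hpos : 0 < a0 e := (ha0.1 e).lt_of_ne (Ne.symm hne)
          have hk : (e.1, j0) ∈ F := by rw [heF.2]; exact hj0F
          have hdens := hm0 e heF.1 hpos j0 hk
          -- derive Q e.2, contradiction
          have he2I : e.2 ∈ I1 := (hedge e heF.1).2
          have hw2 : 0 < w e.2 := hw1 _ he2I
          have hwj0 : 0 < w j0 := hw1 _ hj0I
          have hQe2 : Q e.2 := by
            show γ * payload1 F a0 e.2 < w e.2
            rw [← div_lt_one hw2, mul_div_assoc]
            calc γ * (payload1 F a0 e.2 / w e.2)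
                ≤ γ * (payload1 F a0 j0 / w j0) := by
                  apply mul_le_mul_of_nonneg_left _ hγ
                  exact hdens
              _ < 1 := by
                  rw [← mul_div_assoc, div_lt_one hwj0]
                  exact hj0Q
          have : e ∈ E := Finset.mem_filter.mpr ⟨heF.1, hQe2⟩
          have : e ∈ E.filter (fun e => e.1 = i) := Finset.mem_filter.mpr ⟨this, heF.2⟩
          exact heE this
      have ha0w : ∑ e ∈ E.filter (fun e => e.1 = i), a0 e = w i := by
        rw [ha0full]
        exact ha0.2.2 i hi ⟨j0, hj0F⟩
      have hb0w : ∑ e ∈ E.filter (fun e => e.1 = i), b0 e ≤ w i := by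
        have hsub : E.filter (fun e => e.1 = i) ⊆ F.filter (fun e => e.1 = i) := by
          intro e he
          rw [Finset.mem_filter] at he ⊢
          exact ⟨hEF he.1, he.2⟩
        calc ∑ e ∈ E.filter (fun e => e.1 = i), b0 e
            ≤ ∑ e ∈ F.filter (fun e => e.1 = i), b0 e :=
              Finset.sum_le_sum_of_subset_of_nonneg hsub (fun e _ _ => hb0.1 e)
          _ = w i := hb0.2.2 i hi ⟨j0, hj0F⟩
      rw [ha0w]
      exact hb0w
    · have hemp : E.filter (fun e => e.1 = i) = ∅ := by
        apply Finset.eq_empty_of_forall_notMem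
        intro e he
        rw [Finset.mem_filter, hEdef, Finset.mem_filter] at he
        apply hex
        refine ⟨e.2, ?_, he.1.2⟩
        rw [← he.2]
        exact he.1.1
      rw [hemp]
      simp
  -- assemble
  have hle1 : hsDiv F γ a0 a1 ≤ (∑ e ∈ E, a1 e) - γ * ∑ e ∈ E, a0 e :=
    Finset.sup'_le _ _ hopt
  have hle2 : (∑ e ∈ E, b1 e) - γ * ∑ e ∈ E, b0 e ≤ hsDiv F γ b0 b1 := by
    unfold hsDiv
    exact Finset.le_sup' (fun S => (∑ e ∈ S, b1 e) - γ * ∑ e ∈ S, b0 e)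
      (Finset.mem_powerset.mpr hEF)
  have hmid : (∑ e ∈ E, a1 e) - γ * ∑ e ∈ E, a0 e
      ≤ (∑ e ∈ E, b1 e) - γ * ∑ e ∈ E, b0 e := by
    rw [hE1a, hE1b]
    have := mul_le_mul_of_nonneg_left hE0 hγ
    linarith
  linarith
end

section
/- Let G = (I⁰, I¹; F; w) be a distribution instance, let ι ∈ {0,1} and 0 ≤ τ < 1. Suppose α^ι is a refinement of the side-ι weights achieving τ-multiplicative error, and α^ι̅ is its proportional response. Then for every γ ≥ 0, D_γ(α⁰‖α¹) ≤ ((1−τ)/(1+τ))·D_γ*(G) + 2τ/(1+τ), where D_γ*(G) denotes the minimum of D_γ(β⁰‖β¹) over all refinement pairs (β⁰, β¹) of G. -/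
open Finset

variable {V : Type*} [DecidableEq V]

lemma hsDiv_eq_sum_max (F : Finset (V × V)) (γ : ℝ) (P Q : V × V → ℝ) :
    hsDiv F γ P Q = ∑ e ∈ F, max (Q e - γ * P e) 0 := by
  classical
  apply le_antisymm
  · apply Finset.sup'_le
    intro S hS
    rw [Finset.mem_powerset] at hS
    rw [Finset.mul_sum, ← Finset.sum_sub_distrib]
    calc ∑ e ∈ S, (Q e - γ * P e) ≤ ∑ e ∈ S, max (Q e - γ * P e) 0 :=
          Finset.sum_le_sum fun e _ => le_max_left _ _
      _ ≤ ∑ e ∈ F, max (Q e - γ * P e) 0 :=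
          Finset.sum_le_sum_of_subset_of_nonneg hS fun e _ _ => le_max_right _ _
  · have hmem : F.filter (fun e => 0 ≤ Q e - γ * P e) ∈ F.powerset :=
      Finset.mem_powerset.2 (Finset.filter_subset _ _)
    refine le_trans ?_ (Finset.le_sup' _ hmem)
    rw [Finset.mul_sum, ← Finset.sum_sub_distrib, Finset.sum_filter]
    apply le_of_eq
    apply Finset.sum_congr rfl
    intro e _
    rcases le_or_gt 0 (Q e - γ * P e) with h | h
    · rw [max_eq_left h, if_pos h]
    · rw [max_eq_right h.le, if_neg (not_le.2 h)]

lemma le_hsDiv (F : Finset (V × V)) (γ : ℝ) (P Q : V × V → ℝ) {T : Finset (V × V)}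
    (hT : T ⊆ F) : (∑ e ∈ T, Q e) - γ * ∑ e ∈ T, P e ≤ hsDiv F γ P Q := by
  unfold hsDiv
  exact Finset.le_sup' (fun S => (∑ e ∈ S, Q e) - γ * ∑ e ∈ S, P e) (Finset.mem_powerset.2 hT)

lemma refinement0_total {I0 I1 : Finset V} {F : Finset (V × V)} {w : V → ℝ}
    (hG : IsDistInstance I0 I1 F w) {a : V × V → ℝ}
    (ha : IsRefinement0 I0 F w a) : ∑ e ∈ F, a e = 1 := by
  rw [← Finset.sum_fiberwise_of_maps_to (g := Prod.fst) (t := I0)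
    (fun e he => (hG.1.2.1 e he).1) a, ← hG.2.2.2.1]
  exact Finset.sum_congr rfl fun i hi => ha.2.2 i hi (hG.2.1 i hi)

lemma refinement1_total {I0 I1 : Finset V} {F : Finset (V × V)} {w : V → ℝ}
    (hG : IsDistInstance I0 I1 F w) {a : V × V → ℝ}
    (ha : IsRefinement1 I1 F w a) : ∑ e ∈ F, a e = 1 := by
  rw [← Finset.sum_fiberwise_of_maps_to (g := Prod.snd) (t := I1)
    (fun e he => (hG.1.2.1 e he).2) a, ← hG.2.2.2.2]
  exact Finset.sum_congr rfl fun j hj => ha.2.2 j hj (hG.2.2.1 j hj)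
lemma payload1_maximin_pos {I0 I1 : Finset V} {F : Finset (V × V)} {w : V → ℝ}
    (hG : IsDistInstance I0 I1 F w) {astar : V × V → ℝ}
    (hastar : IsRefinement0 I0 F w astar) (hm : LocallyMaximin0 F w astar) :
    ∀ j ∈ I1, 0 < payload1 F astar j := by
  classical
  intro j hj
  obtain ⟨i, hij⟩ := hG.2.2.1 j hj
  have hiI0 : i ∈ I0 := (hG.1.2.1 _ hij).1
  have hwi : 0 < w i := hG.1.2.2 i (Finset.mem_union_left _ hiI0)
  have hpay : payload0 F astar i = w i := hastar.2.2 i hiI0 ⟨j, hij⟩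
  have hex : ∃ e ∈ F.filter (fun e => e.1 = i), 0 < astar e := by
    by_contra h
    push_neg at h
    have h0 : payload0 F astar i = 0 := Finset.sum_eq_zero fun e he =>
      le_antisymm (h e he) (hastar.1 e)
    rw [h0] at hpay
    linarith
  obtain ⟨e, he, hpos⟩ := hex
  obtain ⟨heF, he1⟩ := Finset.mem_filter.1 he
  have hkI1 : e.2 ∈ I1 := (hG.1.2.1 e heF).2
  have hwk : 0 < w e.2 := hG.1.2.2 _ (Finset.mem_union_right _ hkI1)
  have hwj : 0 < w j := hG.1.2.2 _ (Finset.mem_union_right _ hj)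
  have hpk : 0 < payload1 F astar e.2 := by
    have h1 : astar e ≤ payload1 F astar e.2 :=
      Finset.single_le_sum (f := astar) (fun e' _ => hastar.1 e')
        (Finset.mem_filter.2 ⟨heF, rfl⟩)
    linarith
  have hle : density1 F w astar e.2 ≤ density1 F w astar j :=
    hm e heF hpos j (by rw [he1]; exact hij)
  have hdj : 0 < density1 F w astar j := lt_of_lt_of_le (div_pos hpk hwk) hle
  have hpj : payload1 F astar j = density1 F w astar j * w j := by
    unfold density1
    field_simp
  rw [hpj]
  positivity

lemma payload0_maximin_pos {I0 I1 : Finset V} {F : Finset (V × V)} {w : V → ℝ}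
    (hG : IsDistInstance I0 I1 F w) {bstar : V × V → ℝ}
    (hbstar : IsRefinement1 I1 F w bstar) (hm : LocallyMaximin1 F w bstar) :
    ∀ i ∈ I0, 0 < payload0 F bstar i := by
  classical
  intro i hi
  obtain ⟨j, hij⟩ := hG.2.1 i hi
  have hjI1 : j ∈ I1 := (hG.1.2.1 _ hij).2
  have hwj : 0 < w j := hG.1.2.2 j (Finset.mem_union_right _ hjI1)
  have hpay : payload1 F bstar j = w j := hbstar.2.2 j hjI1 ⟨i, hij⟩
  have hex : ∃ e ∈ F.filter (fun e => e.2 = j), 0 < bstar e := by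
    by_contra h
    push_neg at h
    have h0 : payload1 F bstar j = 0 := Finset.sum_eq_zero fun e he =>
      le_antisymm (h e he) (hbstar.1 e)
    rw [h0] at hpay
    linarith
  obtain ⟨e, he, hpos⟩ := hex
  obtain ⟨heF, he2⟩ := Finset.mem_filter.1 he
  have hkI0 : e.1 ∈ I0 := (hG.1.2.1 e heF).1
  have hwk : 0 < w e.1 := hG.1.2.2 _ (Finset.mem_union_left _ hkI0)
  have hwi : 0 < w i := hG.1.2.2 _ (Finset.mem_union_left _ hi)
  have hpk : 0 < payload0 F bstar e.1 := by
    have h1 : bstar e ≤ payload0 F bstar e.1 :=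
      Finset.single_le_sum (f := bstar) (fun e' _ => hbstar.1 e')
        (Finset.mem_filter.2 ⟨heF, rfl⟩)
    linarith
  have hle : density0 F w bstar e.1 ≤ density0 F w bstar i :=
    hm e heF hpos i (by rw [he2]; exact hij)
  have hdi : 0 < density0 F w bstar i := lt_of_lt_of_le (div_pos hpk hwk) hle
  have hpi : payload0 F bstar i = density0 F w bstar i * w i := by
    unfold density0
    field_simp
  rw [hpi]
  positivity
lemma case0_bound {I0 I1 : Finset V} {F : Finset (V × V)} {w : V → ℝ}
    (hG : IsDistInstance I0 I1 F w)
    {τ : ℝ} (hτ0 : 0 ≤ τ) (hτ1 : τ < 1)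
    {astar : V × V → ℝ} (hastar : IsRefinement0 I0 F w astar)
    (hmastar : LocallyMaximin0 F w astar)
    {a0 a1 : V × V → ℝ} (ha0 : IsRefinement0 I0 F w a0)
    (herr : ∀ j ∈ I1, |density1 F w a0 j - density1 F w astar j| ≤ τ * density1 F w astar j)
    (hpr : IsPropRespOf0 F w a0 a1)
    {γ : ℝ} (hγ : 0 ≤ γ)
    {b0 b1 : V × V → ℝ} (hb0 : IsRefinement0 I0 F w b0) (hb1 : IsRefinement1 I1 F w b1) :
    hsDiv F γ a0 a1 ≤ (1 - τ) * hsDiv F γ b0 b1 + τ := by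
  classical
  obtain ⟨⟨hdisj, hFmem, hwpos⟩, hnb0, hnb1, hw0, hw1⟩ := hG
  have hwI1 : ∀ j ∈ I1, 0 < w j := fun j hj => hwpos j (Finset.mem_union_right _ hj)
  have hwI0 : ∀ i ∈ I0, 0 < w i := fun i hi => hwpos i (Finset.mem_union_left _ hi)
  have hG' : IsDistInstance I0 I1 F w := ⟨⟨hdisj, hFmem, hwpos⟩, hnb0, hnb1, hw0, hw1⟩
  have hpstar : ∀ j ∈ I1, 0 < payload1 F astar j :=
    payload1_maximin_pos hG' hastar hmastar
  have hdstar : ∀ j ∈ I1, 0 < density1 F w astar j := fun j hj =>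
    div_pos (hpstar j hj) (hwI1 j hj)
  have hrho_lb : ∀ j ∈ I1, (1 - τ) * density1 F w astar j ≤ density1 F w a0 j := by
    intro j hj
    have h := (abs_le.1 (herr j hj)).1
    nlinarith
  have hp : ∀ j ∈ I1, 0 < payload1 F a0 j := by
    intro j hj
    have h1 : 0 < density1 F w a0 j := by
      have := hrho_lb j hj
      nlinarith [hdstar j hj]
    have h2 : payload1 F a0 j = density1 F w a0 j * w j := by
      unfold density1
      exact (div_mul_cancel₀ _ (ne_of_gt (hwI1 j hj))).symm
    rw [h2]
    exact mul_pos h1 (hwI1 j hj)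
  -- Step C : compute the divergence of (a0, a1)
  have hC : hsDiv F γ a0 a1 = ∑ j ∈ I1, w j * max (1 - γ * density1 F w a0 j) 0 := by
    rw [hsDiv_eq_sum_max,
      ← Finset.sum_fiberwise_of_maps_to (g := Prod.snd) (t := I1) (fun e he => (hFmem e he).2)]
    apply Finset.sum_congr rfl
    intro j hj
    have hwj := hwI1 j hj
    have hpj := hp j hj
    have hterm : ∀ e ∈ F.filter (fun e => e.2 = j),
        max (a1 e - γ * a0 e) 0 = a0 e * max (w j / payload1 F a0 j - γ) 0 := by
      intro e he
      obtain ⟨heF, he2⟩ := Finset.mem_filter.1 he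
      have h1 : a1 e = a0 e * (w j / payload1 F a0 j) := by
        rw [hpr.2 e heF, he2, mul_div_assoc]
      rw [h1, mul_max_of_nonneg _ _ (ha0.1 e), mul_zero]
      congr 1
      ring
    rw [Finset.sum_congr rfl hterm, ← Finset.sum_mul]
    have hsum : ∑ e ∈ F.filter (fun e => e.2 = j), a0 e = payload1 F a0 j := rfl
    rw [hsum, mul_max_of_nonneg _ _ hpj.le, mul_zero,
      mul_max_of_nonneg _ _ hwj.le, mul_zero]
    congr 1
    unfold density1
    field_simp
  -- Step D : compare with the maximin densities
  have hD : ∑ j ∈ I1, w j * max (1 - γ * density1 F w a0 j) 0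
      ≤ (1 - τ) * (∑ j ∈ I1, w j * max (1 - γ * density1 F w astar j) 0) + τ := by
    have hterm : ∀ j ∈ I1, w j * max (1 - γ * density1 F w a0 j) 0
        ≤ (1 - τ) * (w j * max (1 - γ * density1 F w astar j) 0) + τ * w j := by
      intro j hj
      have hwj := hwI1 j hj
      have h1 := hrho_lb j hj
      have h2 : 1 - γ * density1 F w astar j ≤ max (1 - γ * density1 F w astar j) 0 :=
        le_max_left _ _
      have h3 : (0:ℝ) ≤ max (1 - γ * density1 F w astar j) 0 := le_max_right _ _
      have h4 : max (1 - γ * density1 F w a0 j) 0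
          ≤ (1 - τ) * max (1 - γ * density1 F w astar j) 0 + τ := by
        apply max_le
        · nlinarith [mul_le_mul_of_nonneg_left h1 hγ,
            mul_le_mul_of_nonneg_left h2 (by linarith : (0:ℝ) ≤ 1 - τ)]
        · nlinarith
      nlinarith
    calc ∑ j ∈ I1, w j * max (1 - γ * density1 F w a0 j) 0
        ≤ ∑ j ∈ I1, ((1 - τ) * (w j * max (1 - γ * density1 F w astar j) 0) + τ * w j) :=
          Finset.sum_le_sum hterm
      _ = (1 - τ) * (∑ j ∈ I1, w j * max (1 - γ * density1 F w astar j) 0) + τ := by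
          rw [Finset.sum_add_distrib, ← Finset.mul_sum, ← Finset.mul_sum, hw1, mul_one]
  -- Step E : the maximin value lower-bounds any refinement pair divergence
  have hE : ∑ j ∈ I1, w j * max (1 - γ * density1 F w astar j) 0 ≤ hsDiv F γ b0 b1 := by
    set J := I1.filter (fun j => γ * density1 F w astar j < 1) with hJ
    set T := F.filter (fun e => e.2 ∈ J) with hT
    have hTF : T ⊆ F := Finset.filter_subset _ _
    have hmapT : ∀ e ∈ T, e.2 ∈ J := fun e he => (Finset.mem_filter.1 he).2
    have hfiber : ∀ j ∈ J, T.filter (fun e => e.2 = j) = F.filter (fun e => e.2 = j) := by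
      intro j hj
      rw [hT, Finset.filter_filter]
      apply Finset.filter_congr
      intro e _
      constructor
      · exact fun h => h.2
      · exact fun h => ⟨by rw [h]; exact hj, h⟩
    have hb1T : ∑ e ∈ T, b1 e = ∑ j ∈ J, w j := by
      rw [← Finset.sum_fiberwise_of_maps_to (g := Prod.snd) (t := J) hmapT b1]
      apply Finset.sum_congr rfl
      intro j hj
      rw [hfiber j hj]
      have hjI1 : j ∈ I1 := (Finset.mem_filter.1 hj).1
      exact hb1.2.2 j hjI1 (hnb1 j hjI1)
    have hastarT : ∑ e ∈ T, astar e = ∑ j ∈ J, payload1 F astar j := by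
      rw [← Finset.sum_fiberwise_of_maps_to (g := Prod.snd) (t := J) hmapT astar]
      exact Finset.sum_congr rfl fun j hj => by rw [hfiber j hj]; rfl
    set N := I0.filter (fun i => ∃ j ∈ J, (i, j) ∈ F) with hN
    have hmapT1 : ∀ e ∈ T, e.1 ∈ N := by
      intro e he
      exact Finset.mem_filter.2 ⟨(hFmem e (hTF he)).1, ⟨e.2, hmapT e he, hTF he⟩⟩
    have hb0T : ∑ e ∈ T, b0 e ≤ ∑ i ∈ N, w i := by
      rw [← Finset.sum_fiberwise_of_maps_to (g := Prod.fst) (t := N) hmapT1 b0]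
      apply Finset.sum_le_sum
      intro i hi
      have hiI0 : i ∈ I0 := (Finset.mem_filter.1 hi).1
      calc ∑ e ∈ T.filter (fun e => e.1 = i), b0 e
          ≤ ∑ e ∈ F.filter (fun e => e.1 = i), b0 e :=
            Finset.sum_le_sum_of_subset_of_nonneg
              (Finset.filter_subset_filter _ hTF) (fun e _ _ => hb0.1 e)
        _ = w i := hb0.2.2 i hiI0 (hnb0 i hiI0)
    have hastarN : ∑ e ∈ T, astar e = ∑ i ∈ N, w i := by
      rw [← Finset.sum_fiberwise_of_maps_to (g := Prod.fst) (t := N) hmapT1 astar]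
      apply Finset.sum_congr rfl
      intro i hi
      obtain ⟨hiI0, j0, hj0J, hij0⟩ := Finset.mem_filter.1 hi
      have hsub : ∑ e ∈ T.filter (fun e => e.1 = i), astar e
          = ∑ e ∈ F.filter (fun e => e.1 = i), astar e := by
        apply Finset.sum_subset (Finset.filter_subset_filter _ hTF)
        intro e heF heT
        obtain ⟨heF', he1⟩ := Finset.mem_filter.1 heF
        by_contra hne
        have hpos : 0 < astar e := lt_of_le_of_ne (hastar.1 e) (Ne.symm hne)
        have he2J : e.2 ∈ J := by
          refine Finset.mem_filter.2 ⟨(hFmem e heF').2, ?_⟩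
          have hle := hmastar e heF' hpos j0 (by rw [he1]; exact hij0)
          have hlt := (Finset.mem_filter.1 hj0J).2
          nlinarith [mul_le_mul_of_nonneg_left hle hγ]
        exact heT (Finset.mem_filter.2 ⟨Finset.mem_filter.2 ⟨heF', he2J⟩, he1⟩)
      rw [hsub]
      exact hastar.2.2 i hiI0 (hnb0 i hiI0)
    have hDstar : ∑ j ∈ I1, w j * max (1 - γ * density1 F w astar j) 0
        = ∑ j ∈ J, w j - γ * ∑ j ∈ J, payload1 F astar j := by
      rw [← Finset.sum_filter_add_sum_filter_not I1
        (fun j => γ * density1 F w astar j < 1), ← hJ]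
      have h2 : ∑ j ∈ I1.filter (fun j => ¬ γ * density1 F w astar j < 1),
          w j * max (1 - γ * density1 F w astar j) 0 = 0 := by
        apply Finset.sum_eq_zero
        intro j hj
        have hjc := (Finset.mem_filter.1 hj).2
        rw [max_eq_right (by linarith [not_lt.1 hjc]), mul_zero]
      rw [h2, add_zero, Finset.mul_sum, ← Finset.sum_sub_distrib]
      apply Finset.sum_congr rfl
      intro j hj
      obtain ⟨hjI1, hjlt⟩ := Finset.mem_filter.1 hj
      have hwj := hwI1 j hjI1
      rw [max_eq_left (by linarith)]
      have hpj : payload1 F astar j = density1 F w astar j * w j := by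
        unfold density1
        field_simp
      rw [hpj]
      ring
    have hmono : γ * ∑ e ∈ T, b0 e ≤ γ * ∑ e ∈ T, astar e := by
      apply mul_le_mul_of_nonneg_left _ hγ
      rw [hastarN]
      exact hb0T
    calc ∑ j ∈ I1, w j * max (1 - γ * density1 F w astar j) 0
        = ∑ e ∈ T, b1 e - γ * ∑ e ∈ T, astar e := by rw [hDstar, hb1T, hastarT]
      _ ≤ ∑ e ∈ T, b1 e - γ * ∑ e ∈ T, b0 e := by linarith
      _ ≤ hsDiv F γ b0 b1 := le_hsDiv F γ b0 b1 hTF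
  calc hsDiv F γ a0 a1 = ∑ j ∈ I1, w j * max (1 - γ * density1 F w a0 j) 0 := hC
    _ ≤ (1 - τ) * (∑ j ∈ I1, w j * max (1 - γ * density1 F w astar j) 0) + τ := hD
    _ ≤ (1 - τ) * hsDiv F γ b0 b1 + τ := by
        have := mul_le_mul_of_nonneg_left hE (by linarith : (0:ℝ) ≤ 1 - τ)
        linarith
lemma max_sub_eq_sub_min (x y : ℝ) : max (x - y) 0 = x - min x y := by
  rcases le_total x y with h | h
  · rw [max_eq_right (by linarith), min_eq_left h]
    ring
  · rw [max_eq_left (by linarith), min_eq_right h]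

lemma case1_bound {I0 I1 : Finset V} {F : Finset (V × V)} {w : V → ℝ}
    (hG : IsDistInstance I0 I1 F w)
    {τ : ℝ} (hτ0 : 0 ≤ τ) (hτ1 : τ < 1)
    {bstar : V × V → ℝ} (hbstar : IsRefinement1 I1 F w bstar)
    (hmbstar : LocallyMaximin1 F w bstar)
    {a0 a1 : V × V → ℝ} (ha1 : IsRefinement1 I1 F w a1)
    (herr : ∀ i ∈ I0, |density0 F w a1 i - density0 F w bstar i| ≤ τ * density0 F w bstar i)
    (hpr : IsPropRespOf1 F w a1 a0)
    {γ : ℝ} (hγ : 0 ≤ γ)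
    {b0 b1 : V × V → ℝ} (hb0 : IsRefinement0 I0 F w b0) (hb1 : IsRefinement1 I1 F w b1) :
    hsDiv F γ a0 a1 ≤ (1 - τ) * hsDiv F γ b0 b1 + τ := by
  classical
  obtain ⟨⟨hdisj, hFmem, hwpos⟩, hnb0, hnb1, hw0, hw1⟩ := hG
  have hwI1 : ∀ j ∈ I1, 0 < w j := fun j hj => hwpos j (Finset.mem_union_right _ hj)
  have hwI0 : ∀ i ∈ I0, 0 < w i := fun i hi => hwpos i (Finset.mem_union_left _ hi)
  have hG' : IsDistInstance I0 I1 F w := ⟨⟨hdisj, hFmem, hwpos⟩, hnb0, hnb1, hw0, hw1⟩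
  have hqstar : ∀ i ∈ I0, 0 < payload0 F bstar i :=
    payload0_maximin_pos hG' hbstar hmbstar
  have hdstar : ∀ i ∈ I0, 0 < density0 F w bstar i := fun i hi =>
    div_pos (hqstar i hi) (hwI0 i hi)
  have hsig_lb : ∀ i ∈ I0, (1 - τ) * density0 F w bstar i ≤ density0 F w a1 i := by
    intro i hi
    have h := (abs_le.1 (herr i hi)).1
    nlinarith
  have hq : ∀ i ∈ I0, 0 < payload0 F a1 i := by
    intro i hi
    have h1 : 0 < density0 F w a1 i := by
      have := hsig_lb i hi
      nlinarith [hdstar i hi]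
    have h2 : payload0 F a1 i = density0 F w a1 i * w i := by
      unfold density0
      exact (div_mul_cancel₀ _ (ne_of_gt (hwI0 i hi))).symm
    rw [h2]
    exact mul_pos h1 (hwI0 i hi)
  have hwd : ∀ i ∈ I0, w i * density0 F w a1 i = payload0 F a1 i := by
    intro i hi
    unfold density0
    rw [mul_comm]
    exact div_mul_cancel₀ _ (ne_of_gt (hwI0 i hi))
  have hwdstar : ∀ i ∈ I0, w i * density0 F w bstar i = payload0 F bstar i := by
    intro i hi
    unfold density0
    rw [mul_comm]
    exact div_mul_cancel₀ _ (ne_of_gt (hwI0 i hi))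
  have hqtot : ∑ i ∈ I0, payload0 F a1 i = 1 := by
    unfold payload0
    rw [Finset.sum_fiberwise_of_maps_to (g := Prod.fst) (t := I0)
      (fun e he => (hFmem e he).1) a1]
    exact refinement1_total hG' ha1
  have hqstartot : ∑ i ∈ I0, payload0 F bstar i = 1 := by
    unfold payload0
    rw [Finset.sum_fiberwise_of_maps_to (g := Prod.fst) (t := I0)
      (fun e he => (hFmem e he).1) bstar]
    exact refinement1_total hG' hbstar
  -- Step C : compute the divergence of (a0, a1)
  have hC : hsDiv F γ a0 a1 = ∑ i ∈ I0, w i * max (density0 F w a1 i - γ) 0 := by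
    rw [hsDiv_eq_sum_max,
      ← Finset.sum_fiberwise_of_maps_to (g := Prod.fst) (t := I0) (fun e he => (hFmem e he).1)]
    apply Finset.sum_congr rfl
    intro i hi
    have hwi := hwI0 i hi
    have hqi := hq i hi
    have hterm : ∀ e ∈ F.filter (fun e => e.1 = i),
        max (a1 e - γ * a0 e) 0 = a1 e * max (1 - γ * (w i / payload0 F a1 i)) 0 := by
      intro e he
      obtain ⟨heF, he1⟩ := Finset.mem_filter.1 he
      have h1 : a0 e = a1 e * (w i / payload0 F a1 i) := by
        rw [hpr.2 e heF, he1, mul_div_assoc]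
      rw [h1, mul_max_of_nonneg _ _ (ha1.1 e), mul_zero]
      congr 1
      ring
    rw [Finset.sum_congr rfl hterm, ← Finset.sum_mul]
    have hsum : ∑ e ∈ F.filter (fun e => e.1 = i), a1 e = payload0 F a1 i := rfl
    rw [hsum, mul_max_of_nonneg _ _ hqi.le, mul_zero,
      mul_max_of_nonneg _ _ hwi.le, mul_zero]
    congr 1
    unfold density0
    field_simp
  -- Step D : compare with the maximin densities
  have hD : ∑ i ∈ I0, w i * max (density0 F w a1 i - γ) 0
      ≤ (1 - τ) * (∑ i ∈ I0, w i * max (density0 F w bstar i - γ) 0) + τ := by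
    have hD1 : ∑ i ∈ I0, w i * max (density0 F w a1 i - γ) 0
        = 1 - ∑ i ∈ I0, w i * min (density0 F w a1 i) γ := by
      rw [← hqtot, ← Finset.sum_sub_distrib]
      apply Finset.sum_congr rfl
      intro i hi
      rw [max_sub_eq_sub_min, mul_sub, hwd i hi]
    have hD2 : ∑ i ∈ I0, w i * max (density0 F w bstar i - γ) 0
        = 1 - ∑ i ∈ I0, w i * min (density0 F w bstar i) γ := by
      rw [← hqstartot, ← Finset.sum_sub_distrib]
      apply Finset.sum_congr rfl
      intro i hi
      rw [max_sub_eq_sub_min, mul_sub, hwdstar i hi]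
    have hmin : ∀ i ∈ I0, (1 - τ) * (w i * min (density0 F w bstar i) γ)
        ≤ w i * min (density0 F w a1 i) γ := by
      intro i hi
      have hwi := hwI0 i hi
      have h1 := hsig_lb i hi
      have h2 : (1 - τ) * min (density0 F w bstar i) γ ≤ min (density0 F w a1 i) γ := by
        apply le_min
        · calc (1 - τ) * min (density0 F w bstar i) γ
              ≤ (1 - τ) * density0 F w bstar i :=
                mul_le_mul_of_nonneg_left (min_le_left _ _) (by linarith)
            _ ≤ density0 F w a1 i := h1
        · calc (1 - τ) * min (density0 F w bstar i) γ
              ≤ (1 - τ) * γ := mul_le_mul_of_nonneg_left (min_le_right _ _) (by linarith)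
            _ ≤ γ := by nlinarith
      calc (1 - τ) * (w i * min (density0 F w bstar i) γ)
          = w i * ((1 - τ) * min (density0 F w bstar i) γ) := by ring
        _ ≤ w i * min (density0 F w a1 i) γ :=
            mul_le_mul_of_nonneg_left h2 hwi.le
    have hsum := Finset.sum_le_sum hmin
    rw [← Finset.mul_sum] at hsum
    rw [hD1]
    rw [hD2] -- occurs inside the goal RHS
    nlinarith [hsum]
  -- Step E : the maximin value lower-bounds any refinement pair divergence
  have hE : ∑ i ∈ I0, w i * max (density0 F w bstar i - γ) 0 ≤ hsDiv F γ b0 b1 := by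
    set J := I0.filter (fun i => γ < density0 F w bstar i) with hJ
    set T := F.filter (fun e => e.1 ∈ J) with hT
    have hTF : T ⊆ F := Finset.filter_subset _ _
    have hmapT : ∀ e ∈ T, e.1 ∈ J := fun e he => (Finset.mem_filter.1 he).2
    have hfiber : ∀ i ∈ J, T.filter (fun e => e.1 = i) = F.filter (fun e => e.1 = i) := by
      intro i hi
      rw [hT, Finset.filter_filter]
      apply Finset.filter_congr
      intro e _
      constructor
      · exact fun h => h.2
      · exact fun h => ⟨by rw [h]; exact hi, h⟩
    have hb0T : ∑ e ∈ T, b0 e ≤ ∑ i ∈ J, w i := by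
      rw [← Finset.sum_fiberwise_of_maps_to (g := Prod.fst) (t := J) hmapT b0]
      apply Finset.sum_le_sum
      intro i hi
      have hiI0 : i ∈ I0 := (Finset.mem_filter.1 hi).1
      calc ∑ e ∈ T.filter (fun e => e.1 = i), b0 e
          ≤ ∑ e ∈ F.filter (fun e => e.1 = i), b0 e :=
            Finset.sum_le_sum_of_subset_of_nonneg
              (Finset.filter_subset_filter _ hTF) (fun e _ _ => hb0.1 e)
        _ = w i := hb0.2.2 i hiI0 (hnb0 i hiI0)
    have hbstarT : ∑ e ∈ T, bstar e = ∑ i ∈ J, payload0 F bstar i := by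
      rw [← Finset.sum_fiberwise_of_maps_to (g := Prod.fst) (t := J) hmapT bstar]
      exact Finset.sum_congr rfl fun i hi => by rw [hfiber i hi]; rfl
    -- complement edge set
    set Tc := F.filter (fun e => e.1 ∉ J) with hTc
    set M := I1.filter (fun j => ∃ p ∈ F, p.2 = j ∧ p.1 ∉ J) with hM
    have hmapTc : ∀ e ∈ Tc, e.2 ∈ M := by
      intro e he
      obtain ⟨heF, he1⟩ := Finset.mem_filter.1 he
      exact Finset.mem_filter.2 ⟨(hFmem e heF).2, ⟨e, heF, rfl, he1⟩⟩
    have hb1Tc : ∑ e ∈ Tc, b1 e ≤ ∑ j ∈ M, w j := by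
      rw [← Finset.sum_fiberwise_of_maps_to (g := Prod.snd) (t := M) hmapTc b1]
      apply Finset.sum_le_sum
      intro j hj
      have hjI1 : j ∈ I1 := (Finset.mem_filter.1 hj).1
      calc ∑ e ∈ Tc.filter (fun e => e.2 = j), b1 e
          ≤ ∑ e ∈ F.filter (fun e => e.2 = j), b1 e :=
            Finset.sum_le_sum_of_subset_of_nonneg
              (Finset.filter_subset_filter _ (Finset.filter_subset _ _))
              (fun e _ _ => hb1.1 e)
        _ = w j := hb1.2.2 j hjI1 (hnb1 j hjI1)
    have hbstarTc : ∑ e ∈ Tc, bstar e = ∑ j ∈ M, w j := by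
      rw [← Finset.sum_fiberwise_of_maps_to (g := Prod.snd) (t := M) hmapTc bstar]
      apply Finset.sum_congr rfl
      intro j hj
      obtain ⟨hjI1, p, hpF, hp2, hp1⟩ := Finset.mem_filter.1 hj
      have hsub : ∑ e ∈ Tc.filter (fun e => e.2 = j), bstar e
          = ∑ e ∈ F.filter (fun e => e.2 = j), bstar e := by
        apply Finset.sum_subset (Finset.filter_subset_filter _ (Finset.filter_subset _ _))
        intro e heF heT
        obtain ⟨heF', he2⟩ := Finset.mem_filter.1 heF
        by_contra hne
        have hpos : 0 < bstar e := lt_of_le_of_ne (hbstar.1 e) (Ne.symm hne)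
        have he1J : e.1 ∈ J := by
          by_contra he1J
          exact heT (Finset.mem_filter.2 ⟨Finset.mem_filter.2 ⟨heF', he1J⟩, he2⟩)
        have hp1I0 : p.1 ∈ I0 := (hFmem p hpF).1
        have hpe : (p.1, e.2) ∈ F := by
          rw [he2, ← hp2]
          exact hpF
        have hle := hmbstar e heF' hpos p.1 hpe
        have hlt : γ < density0 F w bstar e.1 := (Finset.mem_filter.1 he1J).2
        have hnotlt : ¬ γ < density0 F w bstar p.1 := by
          intro hcon
          exact hp1 (Finset.mem_filter.2 ⟨hp1I0, hcon⟩)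
        push_neg at hnotlt
        linarith
      rw [hsub]
      exact hbstar.2.2 j hjI1 (hnb1 j hjI1)
    have hsplit1 : ∑ e ∈ T, b1 e + ∑ e ∈ Tc, b1 e = 1 := by
      rw [hT, hTc, Finset.sum_filter_add_sum_filter_not]
      exact refinement1_total hG' hb1
    have hsplit2 : ∑ e ∈ T, bstar e + ∑ e ∈ Tc, bstar e = 1 := by
      rw [hT, hTc, Finset.sum_filter_add_sum_filter_not]
      exact refinement1_total hG' hbstar
    have hb1T : ∑ i ∈ J, payload0 F bstar i ≤ ∑ e ∈ T, b1 e := by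
      rw [← hbstarT]
      linarith [hb1Tc, hbstarTc]
    have hDstar : ∑ i ∈ I0, w i * max (density0 F w bstar i - γ) 0
        = ∑ i ∈ J, payload0 F bstar i - γ * ∑ i ∈ J, w i := by
      rw [← Finset.sum_filter_add_sum_filter_not I0
        (fun i => γ < density0 F w bstar i), ← hJ]
      have h2 : ∑ i ∈ I0.filter (fun i => ¬ γ < density0 F w bstar i),
          w i * max (density0 F w bstar i - γ) 0 = 0 := by
        apply Finset.sum_eq_zero
        intro i hi
        have hic := (Finset.mem_filter.1 hi).2
        rw [max_eq_right (by linarith [not_lt.1 hic]), mul_zero]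
      rw [h2, add_zero, Finset.mul_sum, ← Finset.sum_sub_distrib]
      apply Finset.sum_congr rfl
      intro i hi
      obtain ⟨hiI0, hilt⟩ := Finset.mem_filter.1 hi
      rw [max_eq_left (by linarith), mul_sub, hwdstar i hiI0]
      ring
    have hmono : γ * ∑ e ∈ T, b0 e ≤ γ * ∑ i ∈ J, w i :=
      mul_le_mul_of_nonneg_left hb0T hγ
    calc ∑ i ∈ I0, w i * max (density0 F w bstar i - γ) 0
        = ∑ i ∈ J, payload0 F bstar i - γ * ∑ i ∈ J, w i := hDstar
      _ ≤ ∑ e ∈ T, b1 e - γ * ∑ e ∈ T, b0 e := by linarith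
      _ ≤ hsDiv F γ b0 b1 := le_hsDiv F γ b0 b1 hTF
  calc hsDiv F γ a0 a1 = ∑ i ∈ I0, w i * max (density0 F w a1 i - γ) 0 := hC
    _ ≤ (1 - τ) * (∑ i ∈ I0, w i * max (density0 F w bstar i - γ) 0) + τ := hD
    _ ≤ (1 - τ) * hsDiv F γ b0 b1 + τ := by
        have := mul_le_mul_of_nonneg_left hE (by linarith : (0:ℝ) ≤ 1 - τ)
        linarith

/-- **Approximate refinements give approximately closest pairs for hockey-stick divergences.**
In a distribution instance, fix a side `ι ∈ {0,1}` and `0 ≤ τ < 1`; suppose `α^ι` is a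
refinement of the side-`ι` weights achieving `τ`-multiplicative error (with respect to the
density vector induced by a locally maximin refinement of the side-`ι` weights, which is
independent of its choice), and `α^ι̅` is its proportional response.  Then for every `γ ≥ 0`,
`D_γ(α⁰ ‖ α¹) ≤ ((1-τ)/(1+τ))·D_γ*(G) + 2τ/(1+τ)`, where `D_γ*(G)` is the minimum of
`D_γ(β⁰ ‖ β¹)` over all refinement pairs `(β⁰, β¹)`.  The choice of `ι` is expressed by the
disjunction `hcase`. -/
theorem approx_refinement_hockey_stick_bound
    (I0 I1 : Finset V) (F : Finset (V × V)) (w : V → ℝ)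
    (hG : IsDistInstance I0 I1 F w)
    (τ : ℝ) (hτ0 : 0 ≤ τ) (hτ1 : τ < 1)
    (astar : V × V → ℝ)
    (hastar : IsRefinement0 I0 F w astar) (hmastar : LocallyMaximin0 F w astar)
    (bstar : V × V → ℝ)
    (hbstar : IsRefinement1 I1 F w bstar) (hmbstar : LocallyMaximin1 F w bstar)
    (a0 a1 : V × V → ℝ)
    (ha0 : IsRefinement0 I0 F w a0) (ha1 : IsRefinement1 I1 F w a1)
    (hcase :
      ((∀ j ∈ I1, |density1 F w a0 j - density1 F w astar j| ≤ τ * density1 F w astar j) ∧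
          IsPropRespOf0 F w a0 a1) ∨
      ((∀ i ∈ I0, |density0 F w a1 i - density0 F w bstar i| ≤ τ * density0 F w bstar i) ∧
          IsPropRespOf1 F w a1 a0))
    (γ : ℝ) (hγ : 0 ≤ γ)
    (d : ℝ)
    (hd : IsLeast {v : ℝ | ∃ b0 b1 : V × V → ℝ,
        IsRefinement0 I0 F w b0 ∧ IsRefinement1 I1 F w b1 ∧ v = hsDiv F γ b0 b1} d) :
    hsDiv F γ a0 a1 ≤ (1 - τ) / (1 + τ) * d + 2 * τ / (1 + τ) := by
  obtain ⟨hmem, hlb⟩ := hd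
  obtain ⟨b0, b1, hb0, hb1, hdeq⟩ := hmem
  have hd1 : d ≤ 1 := by
    rw [hdeq]
    have htot := refinement1_total hG hb1
    apply Finset.sup'_le
    intro S hS
    rw [Finset.mem_powerset] at hS
    have h1 : ∑ e ∈ S, b1 e ≤ 1 := by
      rw [← htot]
      exact Finset.sum_le_sum_of_subset_of_nonneg hS (fun e _ _ => hb1.1 e)
    have h2 : 0 ≤ γ * ∑ e ∈ S, b0 e :=
      mul_nonneg hγ (Finset.sum_nonneg fun e _ => hb0.1 e)
    linarith
  have hkey : hsDiv F γ a0 a1 ≤ (1 - τ) * d + τ := by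
    rcases hcase with ⟨herr, hpr⟩ | ⟨herr, hpr⟩
    · rw [hdeq]
      exact case0_bound hG hτ0 hτ1 hastar hmastar ha0 herr hpr hγ hb0 hb1
    · rw [hdeq]
      exact case1_bound hG hτ0 hτ1 hbstar hmbstar ha1 herr hpr hγ hb0 hb1
  have h1τ : (0:ℝ) < 1 + τ := by linarith
  have h2 : ((1 - τ) / (1 + τ) * d + 2 * τ / (1 + τ)) - ((1 - τ) * d + τ)
      = τ * (1 - τ) * (1 - d) / (1 + τ) := by
    field_simp
    ring
  have h3 : 0 ≤ τ * (1 - τ) * (1 - d) / (1 + τ) :=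
    div_nonneg (mul_nonneg (mul_nonneg hτ0 (by linarith)) (by linarith)) h1τ.le
  linarith
end

section
/- Let G = (I⁰, I¹; F; w) be an instance, let ι̅ ∈ {0,1} and 0 ≤ τ < 1. Suppose α^ι̅ is a refinement of the side-ι̅ weights achieving τ-multiplicative error, and α^ι is its proportional response. Then for every pair of nonnegative weights c = (c⁰, c¹), the value of the fractional matching c•α is at least ((1−τ)/(1+τ)) times the maximum value of a fractional matching in G^(c). -/
open Finset

variable {V : Type*} [DecidableEq V]

section AuxLemmas

lemma mul_min_nonneg (a b c : ℝ) (ha : 0 ≤ a) : a * min b c = min (a * b) (a * c) := by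
  rcases le_total b c with h | h
  · rw [min_eq_left h, min_eq_left (mul_le_mul_of_nonneg_left h ha)]
  · rw [min_eq_right h, min_eq_right (mul_le_mul_of_nonneg_left h ha)]

lemma payload0_nonneg (F : Finset (V × V)) (a : V × V → ℝ) (ha : ∀ e, 0 ≤ a e) (i : V) :
    0 ≤ payload0 F a i := Finset.sum_nonneg fun e _ => ha e

lemma payload1_nonneg (F : Finset (V × V)) (a : V × V → ℝ) (ha : ∀ e, 0 ≤ a e) (j : V) :
    0 ≤ payload1 F a j := Finset.sum_nonneg fun e _ => ha e

lemma sum_eq_sum_payload0 (I0 : Finset V) (F : Finset (V × V)) (a : V × V → ℝ)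
    (hF : ∀ e ∈ F, e.1 ∈ I0) : ∑ e ∈ F, a e = ∑ i ∈ I0, payload0 F a i :=
  (Finset.sum_fiberwise_of_maps_to hF a).symm

lemma sum_eq_sum_payload1 (I1 : Finset V) (F : Finset (V × V)) (a : V × V → ℝ)
    (hF : ∀ e ∈ F, e.2 ∈ I1) : ∑ e ∈ F, a e = ∑ j ∈ I1, payload1 F a j :=
  (Finset.sum_fiberwise_of_maps_to hF a).symm

end AuxLemmas


/-- Core bound for the side-0 case: if `astar` is a locally maximin side-0 refinement,
`a0` has `τ`-close side-1 densities and `a1` is its proportional response, then the value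
of `c • α` is within a `(1-τ)` factor of any feasible matching. -/
lemma caseA_bound
    (I0 I1 : Finset V) (F : Finset (V × V)) (w : V → ℝ)
    (hF : ∀ e ∈ F, e.1 ∈ I0 ∧ e.2 ∈ I1)
    (hw0 : ∀ v ∈ I0, 0 < w v) (hw1 : ∀ v ∈ I1, 0 < w v)
    (τ : ℝ) (hτ0 : 0 ≤ τ) (hτ1 : τ ≤ 1)
    (astar : V × V → ℝ)
    (hastar : IsRefinement0 I0 F w astar) (hmastar : LocallyMaximin0 F w astar)
    (a0 a1 : V × V → ℝ) (ha0nn : ∀ e, 0 ≤ a0 e) (ha1 : IsRefinement1 I1 F w a1)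
    (herr : ∀ j ∈ I1, |density1 F w a0 j - density1 F w astar j| ≤ τ * density1 F w astar j)
    (hpr : IsPropRespOf0 F w a0 a1)
    (c0 c1 : ℝ) (hc0 : 0 ≤ c0) (hc1 : 0 ≤ c1)
    (x : V × V → ℝ) (hx : FeasibleMatching I0 I1 F w c0 c1 x) :
    (1 - τ) * matchVal F x ≤ matchVal F (cdot c0 c1 a0 a1) := by
  classical
  obtain ⟨hxnn, hxF, hx0, hx1⟩ := hx
  have hznn : 0 ≤ matchVal F (cdot c0 c1 a0 a1) :=
    Finset.sum_nonneg fun e _ => le_min (mul_nonneg hc0 (ha0nn e)) (mul_nonneg hc1 (ha1.1 e))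
  rcases eq_or_lt_of_le hc0 with hc0' | hc0'
  · -- `c0 = 0`: every feasible matching has value zero
    have hvx : matchVal F x = 0 := by
      rw [matchVal, sum_eq_sum_payload0 I0 F x (fun e he => (hF e he).1)]
      refine Finset.sum_eq_zero fun i hi => le_antisymm ?_ (payload0_nonneg F x hxnn i)
      calc payload0 F x i ≤ c0 * w i := hx0 i hi
        _ = 0 := by rw [← hc0']; ring
    rw [hvx, mul_zero]; exact hznn
  rcases eq_or_lt_of_le hc1 with hc1' | hc1'
  · have hvx : matchVal F x = 0 := by
      rw [matchVal, sum_eq_sum_payload1 I1 F x (fun e he => (hF e he).2)]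
      refine Finset.sum_eq_zero fun j hj => le_antisymm ?_ (payload1_nonneg F x hxnn j)
      calc payload1 F x j ≤ c1 * w j := hx1 j hj
        _ = 0 := by rw [← hc1']; ring
    rw [hvx, mul_zero]; exact hznn
  -- main case: positivity of `payload1 F a0` at vertices with neighbours
  have hP : ∀ j ∈ I1, (∃ i, (i, j) ∈ F) → 0 < payload1 F a0 j := by
    intro j hj hnb
    rcases lt_or_eq_of_le (payload1_nonneg F a0 ha0nn j) with h | h
    · exact h
    exfalso
    have hz0 : ∀ e ∈ F.filter (fun e => e.2 = j), a0 e = 0 :=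
      (Finset.sum_eq_zero_iff_of_nonneg (fun e _ => ha0nn e)).1 h.symm
    have h1 : payload1 F a1 j = 0 := by
      refine Finset.sum_eq_zero fun e he => ?_
      have heF : e ∈ F := (Finset.mem_filter.1 he).1
      rw [hpr.2 e heF, hz0 e he]; ring
    have h2 : w j = 0 := by rw [← ha1.2.2 j hj hnb, h1]
    exact absurd h2 (ne_of_gt (hw1 j hj))
  -- consequence of the error bound
  have hPQ : ∀ j ∈ I1, (1 - τ) * payload1 F astar j ≤ payload1 F a0 j := by
    intro j hj
    have hwj := hw1 j hj
    have h := (abs_le.1 (herr j hj)).1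
    simp only [density1] at h
    have h' : (-(τ * payload1 F astar j)) / w j
        ≤ (payload1 F a0 j - payload1 F astar j) / w j := by
      rw [neg_div, sub_div]
      simpa [mul_div_assoc] using h
    have h2 := (div_le_div_iff₀ hwj hwj).1 h'
    have h3 : -(τ * payload1 F astar j) ≤ payload1 F a0 j - payload1 F astar j :=
      le_of_mul_le_mul_right h2 hwj
    linarith
  -- value of the induced matching
  have hzval : matchVal F (cdot c0 c1 a0 a1)
      = ∑ j ∈ I1, min (c0 * payload1 F a0 j) (c1 * w j) := by
    rw [matchVal, sum_eq_sum_payload1 I1 F _ (fun e he => (hF e he).2)]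
    refine Finset.sum_congr rfl fun j hj => ?_
    by_cases hnb : ∃ i, (i, j) ∈ F
    · have hPj := hP j hj hnb
      have hwj := hw1 j hj
      have hterm : ∀ e ∈ F.filter (fun e => e.2 = j),
          cdot c0 c1 a0 a1 e = a0 e * min c0 (c1 * w j / payload1 F a0 j) := by
        intro e he
        obtain ⟨heF, he2⟩ := Finset.mem_filter.1 he
        show min (c0 * a0 e) (c1 * a1 e) = _
        rw [hpr.2 e heF, he2, mul_min_nonneg _ _ _ (ha0nn e)]
        congr 1
        · ring
        · field_simp
      rw [payload1, Finset.sum_congr rfl hterm, ← Finset.sum_mul]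
      have hsum : (∑ e ∈ F.filter (fun e => e.2 = j), a0 e) = payload1 F a0 j := rfl
      rw [hsum, mul_min_nonneg _ _ _ hPj.le]
      congr 1
      · ring
      · field_simp
    · have hempty : F.filter (fun e => e.2 = j) = ∅ := by
        refine Finset.filter_eq_empty_iff.2 fun e he h2 => ?_
        have he' : (e.1, e.2) ∈ F := he
        rw [h2] at he'
        exact hnb ⟨e.1, he'⟩
      simp only [payload1, hempty, Finset.sum_empty, mul_zero]
      rw [min_eq_left (mul_nonneg hc1 (hw1 j hj).le)]
  -- the threshold predicate and vertex classes
  set qj : V → Prop := fun j => c1 * w j ≤ c0 * payload1 F astar j with hqj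
  set S : Finset V := I0.filter (fun i => ∃ k, (i, k) ∈ F ∧ ¬ qj k) with hS
  -- upper bound on the value of `x`
  have hub : matchVal F x
      ≤ (∑ j ∈ I1.filter qj, c1 * w j) + ∑ i ∈ S, c0 * w i := by
    rw [matchVal, ← Finset.sum_filter_add_sum_filter_not F (fun e => qj e.2) x]
    refine add_le_add ?_ ?_
    · have hmap : ∀ e ∈ F.filter (fun e => qj e.2), e.2 ∈ I1.filter qj := by
        intro e he
        obtain ⟨heF, heq⟩ := Finset.mem_filter.1 he
        exact Finset.mem_filter.2 ⟨(hF e heF).2, heq⟩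
      rw [← Finset.sum_fiberwise_of_maps_to hmap x]
      refine Finset.sum_le_sum fun j hj => ?_
      calc (∑ e ∈ (F.filter (fun e => qj e.2)).filter (fun e => e.2 = j), x e)
          ≤ payload1 F x j := by
            refine Finset.sum_le_sum_of_subset_of_nonneg ?_ (fun e _ _ => hxnn e)
            intro e he
            simp only [Finset.mem_filter] at he ⊢
            exact ⟨he.1.1, he.2⟩
        _ ≤ c1 * w j := hx1 j (Finset.mem_filter.1 hj).1
    · have hmap : ∀ e ∈ F.filter (fun e => ¬ qj e.2), e.1 ∈ S := by
        intro e he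
        obtain ⟨heF, heq⟩ := Finset.mem_filter.1 he
        refine Finset.mem_filter.2 ⟨(hF e heF).1, ⟨e.2, ?_, heq⟩⟩
        exact heF
      rw [← Finset.sum_fiberwise_of_maps_to hmap x]
      refine Finset.sum_le_sum fun i hi => ?_
      calc (∑ e ∈ (F.filter (fun e => ¬ qj e.2)).filter (fun e => e.1 = i), x e)
          ≤ payload0 F x i := by
            refine Finset.sum_le_sum_of_subset_of_nonneg ?_ (fun e _ _ => hxnn e)
            intro e he
            simp only [Finset.mem_filter] at he ⊢
            exact ⟨he.1.1, he.2⟩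
        _ ≤ c0 * w i := hx0 i (Finset.mem_filter.1 hi).1
  -- transport weights of `S` to low-density payloads
  have hSlow : ∑ i ∈ S, w i ≤ ∑ j ∈ I1.filter (fun j => ¬ qj j), payload1 F astar j := by
    have h1 : ∑ i ∈ S, w i = ∑ e ∈ F.filter (fun e => e.1 ∈ S), astar e := by
      rw [← Finset.sum_fiberwise_of_maps_to
        (fun e (he : e ∈ F.filter (fun e => e.1 ∈ S)) => (Finset.mem_filter.1 he).2) astar]
      refine Finset.sum_congr rfl fun i hi => ?_
      obtain ⟨hiI0, k, hkF, hklow⟩ := Finset.mem_filter.1 hi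
      rw [← hastar.2.2 i hiI0 ⟨k, hkF⟩, payload0]
      refine (Finset.sum_congr ?_ (fun _ _ => rfl)).symm
      ext e
      simp only [Finset.mem_filter]
      constructor
      · rintro ⟨⟨heF, _⟩, he1⟩; exact ⟨heF, he1⟩
      · rintro ⟨heF, he1⟩; exact ⟨⟨heF, he1 ▸ hi⟩, he1⟩
    rw [h1]
    have h2 : ∑ e ∈ F.filter (fun e => e.1 ∈ S), astar e
        ≤ ∑ e ∈ F.filter (fun e => ¬ qj e.2), astar e := by
      rw [← Finset.sum_filter_ne_zero (F.filter (fun e => e.1 ∈ S))]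
      refine Finset.sum_le_sum_of_subset_of_nonneg ?_ (fun e _ _ => hastar.1 e)
      intro e he
      simp only [Finset.mem_filter] at he ⊢
      obtain ⟨⟨heF, heS⟩, hene⟩ := he
      refine ⟨heF, ?_⟩
      obtain ⟨_, k, hkF, hklow⟩ := Finset.mem_filter.1 heS
      have hklow' : c0 * payload1 F astar k < c1 * w k := not_le.1 hklow
      have hpos : 0 < astar e := lt_of_le_of_ne (hastar.1 e) (Ne.symm hene)
      have hm := hmastar e heF hpos k hkF
      simp only [density1] at hm
      have hwk : 0 < w k := hw1 k (hF (e.1, k) hkF).2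
      have hwe : 0 < w e.2 := hw1 e.2 (hF e heF).2
      rw [div_le_div_iff₀ hwe hwk] at hm
      rw [hqj, not_le]
      nlinarith [mul_le_mul_of_nonneg_left hm hc0, mul_lt_mul_of_pos_right hklow' hwe]
    refine h2.trans (le_of_eq ?_)
    rw [← Finset.sum_fiberwise_of_maps_to (t := I1.filter (fun j => ¬ qj j))
      (g := Prod.snd) ?_ astar]
    · refine Finset.sum_congr rfl fun j hj => ?_
      have hjlo : ¬ qj j := (Finset.mem_filter.1 hj).2
      refine Finset.sum_congr ?_ (fun _ _ => rfl)
      ext e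
      simp only [Finset.mem_filter]
      constructor
      · rintro ⟨⟨heF, _⟩, he2⟩; exact ⟨heF, he2⟩
      · rintro ⟨heF, he2⟩; exact ⟨⟨heF, he2 ▸ hjlo⟩, he2⟩
    · intro e he
      obtain ⟨heF, heq⟩ := Finset.mem_filter.1 he
      exact Finset.mem_filter.2 ⟨(hF e heF).2, heq⟩
  -- lower bound the matching value by the cover value
  have hM : (1 - τ) * ((∑ j ∈ I1.filter qj, c1 * w j)
        + c0 * ∑ j ∈ I1.filter (fun j => ¬ qj j), payload1 F astar j)
      ≤ ∑ j ∈ I1, min (c0 * payload1 F a0 j) (c1 * w j) := by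
    rw [← Finset.sum_filter_add_sum_filter_not I1 qj
      (fun j => min (c0 * payload1 F a0 j) (c1 * w j)), mul_add, Finset.mul_sum,
      Finset.mul_sum, Finset.mul_sum]
    refine add_le_add (Finset.sum_le_sum fun j hj => ?_) (Finset.sum_le_sum fun j hj => ?_)
    · obtain ⟨hjI, hjhi⟩ := Finset.mem_filter.1 hj
      have hq : c1 * w j ≤ c0 * payload1 F astar j := hjhi
      have hpq := hPQ j hjI
      have hwj := hw1 j hjI
      refine le_min ?_ ?_
      · nlinarith [mul_le_mul_of_nonneg_left hpq hc0]
      · nlinarith [mul_nonneg hτ0 (mul_nonneg hc1 hwj.le)]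
    · obtain ⟨hjI, hjlo⟩ := Finset.mem_filter.1 hj
      have hq : c0 * payload1 F astar j < c1 * w j := not_le.1 hjlo
      have hpq := hPQ j hjI
      have hQnn : 0 ≤ payload1 F astar j := payload1_nonneg F astar hastar.1 j
      refine le_min ?_ ?_
      · nlinarith [mul_le_mul_of_nonneg_left hpq hc0]
      · nlinarith [mul_nonneg hc0 hQnn]
  have h1τ : (0:ℝ) ≤ 1 - τ := by linarith
  calc (1 - τ) * matchVal F x
      ≤ (1 - τ) * ((∑ j ∈ I1.filter qj, c1 * w j) + ∑ i ∈ S, c0 * w i) :=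
        mul_le_mul_of_nonneg_left hub h1τ
    _ ≤ (1 - τ) * ((∑ j ∈ I1.filter qj, c1 * w j)
        + c0 * ∑ j ∈ I1.filter (fun j => ¬ qj j), payload1 F astar j) := by
        refine mul_le_mul_of_nonneg_left (add_le_add le_rfl ?_) h1τ
        calc ∑ i ∈ S, c0 * w i = c0 * ∑ i ∈ S, w i := by rw [Finset.mul_sum]
          _ ≤ _ := mul_le_mul_of_nonneg_left hSlow hc0
    _ ≤ ∑ j ∈ I1, min (c0 * payload1 F a0 j) (c1 * w j) := hM
    _ = matchVal F (cdot c0 c1 a0 a1) := hzval.symm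


section Swap

/-- The swap embedding on pairs. -/
def swapEmb {V : Type*} : V × V ↪ V × V := ⟨Prod.swap, Prod.swap_injective⟩

lemma mem_map_swap (F : Finset (V × V)) (e : V × V) :
    e ∈ F.map swapEmb ↔ (e.2, e.1) ∈ F := by
  simp only [Finset.mem_map, swapEmb, Function.Embedding.coeFn_mk]
  constructor
  · rintro ⟨a, ha, rfl⟩; exact ha
  · intro h; exact ⟨(e.2, e.1), h, rfl⟩

lemma filter_fst_map_swap (F : Finset (V × V)) (j : V) :
    (F.map swapEmb).filter (fun e => e.1 = j) = (F.filter (fun e => e.2 = j)).map swapEmb := by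
  ext e
  rw [Finset.mem_filter, mem_map_swap, mem_map_swap, Finset.mem_filter]

lemma filter_snd_map_swap (F : Finset (V × V)) (j : V) :
    (F.map swapEmb).filter (fun e => e.2 = j) = (F.filter (fun e => e.1 = j)).map swapEmb := by
  ext e
  rw [Finset.mem_filter, mem_map_swap, mem_map_swap, Finset.mem_filter]

lemma payload0_map_swap (F : Finset (V × V)) (b : V × V → ℝ) (j : V) :
    payload0 (F.map swapEmb) b j = payload1 F (fun e => b (e.2, e.1)) j := by
  rw [payload0, filter_fst_map_swap, Finset.sum_map, payload1]
  rfl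

lemma payload1_map_swap (F : Finset (V × V)) (b : V × V → ℝ) (j : V) :
    payload1 (F.map swapEmb) b j = payload0 F (fun e => b (e.2, e.1)) j := by
  rw [payload1, filter_snd_map_swap, Finset.sum_map, payload0]
  rfl

lemma matchVal_map_swap (F : Finset (V × V)) (b : V × V → ℝ) :
    matchVal (F.map swapEmb) b = matchVal F (fun e => b (e.2, e.1)) := by
  rw [matchVal, Finset.sum_map, matchVal]
  rfl

end Swap

/-- **Approximate refinements give approximately universal matchings.**
Fix a side `ι̅ ∈ {0,1}` and `0 ≤ τ < 1`; suppose `α^ι̅` is a refinement of the side-`ι̅`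
weights achieving `τ`-multiplicative error (with respect to the density vector induced by a
locally maximin refinement of the side-`ι̅` weights, which is independent of its choice),
and `α^ι` is its proportional response.  Then for every pair of nonnegative weights
`c = (c0, c1)`, the fractional matching `c • α` is feasible and its value is at least
`((1-τ)/(1+τ))` times the maximum value of a fractional matching in `G^(c)`.
The choice of the side `ι̅` is expressed by the disjunction `hcase`. -/
theorem approx_refinement_approx_universal_matching
    (I0 I1 : Finset V) (F : Finset (V × V)) (w : V → ℝ)
    (hG : IsInstance I0 I1 F w)
    (τ : ℝ) (hτ0 : 0 ≤ τ) (hτ1 : τ < 1)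
    (astar : V × V → ℝ)
    (hastar : IsRefinement0 I0 F w astar) (hmastar : LocallyMaximin0 F w astar)
    (bstar : V × V → ℝ)
    (hbstar : IsRefinement1 I1 F w bstar) (hmbstar : LocallyMaximin1 F w bstar)
    (a0 a1 : V × V → ℝ)
    (ha0 : IsRefinement0 I0 F w a0) (ha1 : IsRefinement1 I1 F w a1)
    (hcase :
      ((∀ j ∈ I1, |density1 F w a0 j - density1 F w astar j| ≤ τ * density1 F w astar j) ∧
          IsPropRespOf0 F w a0 a1) ∨
      ((∀ i ∈ I0, |density0 F w a1 i - density0 F w bstar i| ≤ τ * density0 F w bstar i) ∧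
          IsPropRespOf1 F w a1 a0))
    (c0 c1 : ℝ) (hc0 : 0 ≤ c0) (hc1 : 0 ≤ c1) :
    FeasibleMatching I0 I1 F w c0 c1 (cdot c0 c1 a0 a1) ∧
      ∀ x, FeasibleMatching I0 I1 F w c0 c1 x →
        (1 - τ) / (1 + τ) * matchVal F x ≤ matchVal F (cdot c0 c1 a0 a1) := by
  classical
  obtain ⟨hdisj, hF, hw⟩ := hG
  have hw0 : ∀ v ∈ I0, 0 < w v := fun v hv => hw v (Finset.mem_union_left _ hv)
  have hw1 : ∀ v ∈ I1, 0 < w v := fun v hv => hw v (Finset.mem_union_right _ hv)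
  have hdd : (1 - τ) / (1 + τ) ≤ 1 - τ := div_le_self (by linarith) (by linarith)
  constructor
  · -- feasibility of `c • α`
    refine ⟨fun e => le_min (mul_nonneg hc0 (ha0.1 e)) (mul_nonneg hc1 (ha1.1 e)),
      fun e he => ?_, fun i hi => ?_, fun j hj => ?_⟩
    · show min (c0 * a0 e) (c1 * a1 e) = 0
      rw [ha0.2.1 e he, ha1.2.1 e he, mul_zero, mul_zero, min_self]
    · calc payload0 F (cdot c0 c1 a0 a1) i
          ≤ ∑ e ∈ F.filter (fun e => e.1 = i), c0 * a0 e :=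
            Finset.sum_le_sum fun e _ => min_le_left _ _
        _ = c0 * payload0 F a0 i := by rw [payload0, Finset.mul_sum]
        _ ≤ c0 * w i := by
            refine mul_le_mul_of_nonneg_left ?_ hc0
            by_cases hnb : ∃ j, (i, j) ∈ F
            · exact le_of_eq (ha0.2.2 i hi hnb)
            · have hempty : F.filter (fun e => e.1 = i) = ∅ := by
                refine Finset.filter_eq_empty_iff.2 fun e he h1 => ?_
                have he' : (e.1, e.2) ∈ F := he
                rw [h1] at he'
                exact hnb ⟨e.2, he'⟩
              rw [payload0, hempty, Finset.sum_empty]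
              exact (hw0 i hi).le
    · calc payload1 F (cdot c0 c1 a0 a1) j
          ≤ ∑ e ∈ F.filter (fun e => e.2 = j), c1 * a1 e :=
            Finset.sum_le_sum fun e _ => min_le_right _ _
        _ = c1 * payload1 F a1 j := by rw [payload1, Finset.mul_sum]
        _ ≤ c1 * w j := by
            refine mul_le_mul_of_nonneg_left ?_ hc1
            by_cases hnb : ∃ i, (i, j) ∈ F
            · exact le_of_eq (ha1.2.2 j hj hnb)
            · have hempty : F.filter (fun e => e.2 = j) = ∅ := by
                refine Finset.filter_eq_empty_iff.2 fun e he h2 => ?_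
                have he' : (e.1, e.2) ∈ F := he
                rw [h2] at he'
                exact hnb ⟨e.1, he'⟩
              rw [payload1, hempty, Finset.sum_empty]
              exact (hw1 j hj).le
  · -- the approximation guarantee
    intro x hx
    have hxnn : 0 ≤ matchVal F x := Finset.sum_nonneg fun e _ => hx.1 e
    have hstep : (1 - τ) * matchVal F x ≤ matchVal F (cdot c0 c1 a0 a1) := by
      rcases hcase with ⟨herr, hpr⟩ | ⟨herr, hpr⟩
      · exact caseA_bound I0 I1 F w hF hw0 hw1 τ hτ0 hτ1.le astar hastar hmastar
          a0 a1 ha0.1 ha1 herr hpr c0 c1 hc0 hc1 x hx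
      · -- symmetric case via the swapped instance
        set F' : Finset (V × V) := F.map swapEmb with hF'def
        have hF' : ∀ e ∈ F', e.1 ∈ I1 ∧ e.2 ∈ I0 := by
          intro e he
          have h := (mem_map_swap F e).1 he
          exact ⟨(hF _ h).2, (hF _ h).1⟩
        have hbstar' : IsRefinement0 I1 F' w (fun e => bstar (e.2, e.1)) := by
          refine ⟨fun e => hbstar.1 _, fun e he => hbstar.2.1 _
            (fun hc => he ((mem_map_swap F e).2 hc)), fun j hj hnb => ?_⟩
          rw [payload0_map_swap]
          obtain ⟨k, hk⟩ := hnb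
          exact hbstar.2.2 j hj ⟨k, (mem_map_swap F (j, k)).1 hk⟩
        have hmb' : LocallyMaximin0 F' w (fun e => bstar (e.2, e.1)) := by
          intro e he hpos k hk
          have heF : (e.2, e.1) ∈ F := (mem_map_swap F e).1 he
          have hkF : (k, e.1) ∈ F := (mem_map_swap F (e.1, k)).1 hk
          have h := hmbstar (e.2, e.1) heF hpos k hkF
          simpa [hF'def, density1, density0, payload1_map_swap] using h
        have ha1' : IsRefinement1 I0 F' w (fun e => a0 (e.2, e.1)) := by
          refine ⟨fun e => ha0.1 _, fun e he => ha0.2.1 _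
            (fun hc => he ((mem_map_swap F e).2 hc)), fun i hi hnb => ?_⟩
          rw [payload1_map_swap]
          obtain ⟨k, hk⟩ := hnb
          exact ha0.2.2 i hi ⟨k, (mem_map_swap F (k, i)).1 hk⟩
        have herr' : ∀ i ∈ I0,
            |density1 F' w (fun e => a1 (e.2, e.1)) i
              - density1 F' w (fun e => bstar (e.2, e.1)) i|
            ≤ τ * density1 F' w (fun e => bstar (e.2, e.1)) i := by
          intro i hi
          have h := herr i hi
          simpa [hF'def, density1, density0, payload1_map_swap] using h
        have hpr' : IsPropRespOf0 F' w (fun e => a1 (e.2, e.1)) (fun e => a0 (e.2, e.1)) := by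
          refine ⟨fun e he => hpr.1 _ (fun hc => he ((mem_map_swap F e).2 hc)),
            fun e he => ?_⟩
          have heF : (e.2, e.1) ∈ F := (mem_map_swap F e).1 he
          have h := hpr.2 (e.2, e.1) heF
          rw [payload1_map_swap]
          exact h
        have hx' : FeasibleMatching I1 I0 F' w c1 c0 (fun e => x (e.2, e.1)) := by
          refine ⟨fun e => hx.1 _, fun e he => hx.2.1 _
            (fun hc => he ((mem_map_swap F e).2 hc)), fun j hj => ?_, fun i hi => ?_⟩
          · rw [payload0_map_swap]
            exact hx.2.2.2 j hj
          · rw [payload1_map_swap]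
            exact hx.2.2.1 i hi
        have hb := caseA_bound I1 I0 F' w hF' hw1 hw0 τ hτ0 hτ1.le
          (fun e => bstar (e.2, e.1)) hbstar' hmb'
          (fun e => a1 (e.2, e.1)) (fun e => a0 (e.2, e.1)) (fun e => ha1.1 _) ha1'
          herr' hpr' c1 c0 hc1 hc0 (fun e => x (e.2, e.1)) hx'
        have hxval : matchVal F' (fun e => x (e.2, e.1)) = matchVal F x := by
          rw [matchVal_map_swap]
        have hzval : matchVal F' (cdot c1 c0 (fun e => a1 (e.2, e.1)) (fun e => a0 (e.2, e.1)))
            = matchVal F (cdot c0 c1 a0 a1) := by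
          rw [matchVal_map_swap, matchVal, matchVal]
          exact Finset.sum_congr rfl fun e _ => min_comm _ _
        rw [hxval, hzval] at hb
        exact hb
    calc (1 - τ) / (1 + τ) * matchVal F x
        ≤ (1 - τ) * matchVal F x := mul_le_mul_of_nonneg_right hdd hxnn
      _ ≤ _ := hstep
end

section
/- Let g : [0,1] → [0,1] be continuous and concave with g(x) ≥ x for all x ∈ [0,1] (i.e., g is a power function), let γ ≥ 1, extend g to [0,∞) by g(y) = 1 for y ≥ 1, and set x₁ = inf{y ∈ [0,1] : g(y) = 1}. Then for every x ∈ [0,1]: (i) g(γ·x) ≤ min{γ·(g(x) − g(0)) + g(0), 1}, and (ii) (1/γ)·g(x) + 1 − 1/γ ≤ g((1/γ)·x + (1 − 1/γ)·x₁). That is, for each orientation the radial stretching of g by factor γ is pointwise at most the tangential stretching of g by factor γ. -/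
/-- **Radial stretching is pointwise at most tangential stretching.**
Let `g : [0,1] → [0,1]` be continuous and concave with `g(x) ≥ x` (a power function),
extended to `[0,∞)` by `g(y) = 1` for `y ≥ 1`, let `γ ≥ 1`, and let
`x₁ = inf{y ∈ [0,1] : g(y) = 1}`.  Then for every `x ∈ [0,1]`:
(i) `g(γx) ≤ min{γ·(g(x) − g(0)) + g(0), 1}`, and
(ii) `(1/γ)·g(x) + 1 − 1/γ ≤ g((1/γ)·x + (1 − 1/γ)·x₁)`. -/
theorem radial_le_tangential_stretching
    (g : ℝ → ℝ)
    (hcont : ContinuousOn g (Set.Icc 0 1))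
    (hconc : ConcaveOn ℝ (Set.Icc 0 1) g)
    (hge : ∀ x ∈ Set.Icc (0:ℝ) 1, x ≤ g x)
    (hle : ∀ x ∈ Set.Icc (0:ℝ) 1, g x ≤ 1)
    (hext : ∀ y : ℝ, 1 ≤ y → g y = 1)
    (γ : ℝ) (hγ : 1 ≤ γ) :
    ∀ x ∈ Set.Icc (0:ℝ) 1,
      g (γ * x) ≤ min (γ * (g x - g 0) + g 0) 1 ∧
      (1 / γ) * g x + 1 - 1 / γ ≤
        g ((1 / γ) * x + (1 - 1 / γ) * sInf {y : ℝ | y ∈ Set.Icc (0:ℝ) 1 ∧ g y = 1}) := by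
  intro x hx
  have hγ0 : (0:ℝ) < γ := lt_of_lt_of_le one_pos hγ
  have hx0 : (0:ℝ) ≤ x := hx.1
  have hx1 : x ≤ 1 := hx.2
  have h0mem : (0:ℝ) ∈ Set.Icc (0:ℝ) 1 := by constructor <;> norm_num
  have h1mem : (1:ℝ) ∈ Set.Icc (0:ℝ) 1 := by constructor <;> norm_num
  have hg0 : (0:ℝ) ≤ g 0 := hge 0 h0mem
  have hg01 : g 0 ≤ 1 := hle 0 h0mem
  have hg1 : g 1 = 1 := le_antisymm (hle 1 h1mem) (hge 1 h1mem)
  have ha : (0:ℝ) ≤ 1 / γ := by positivity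
  have hb : (0:ℝ) ≤ 1 - 1 / γ := by
    have : 1 / γ ≤ 1 := by
      rw [div_le_one hγ0]; exact hγ
    linarith
  have hab : 1 / γ + (1 - 1 / γ) = 1 := by ring
  constructor
  · -- part (i)
    rcases le_or_gt 1 (γ * x) with hcase | hcase
    · rw [hext _ hcase]
      have key := hconc.2 h1mem h0mem hx0 (show (0:ℝ) ≤ 1 - x by linarith)
        (by ring : x + (1 - x) = 1)
      simp only [smul_eq_mul, mul_one, mul_zero, add_zero] at key
      rw [hg1] at key
      refine le_min ?_ le_rfl
      nlinarith
    · have hγx : γ * x ∈ Set.Icc (0:ℝ) 1 := ⟨by positivity, le_of_lt hcase⟩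
      have key := hconc.2 hγx h0mem ha hb hab
      simp only [smul_eq_mul, mul_zero, add_zero] at key
      have heq : 1 / γ * (γ * x) = x := by
        field_simp
      rw [heq] at key
      have h1 : g (γ * x) ≤ 1 := hle _ hγx
      refine le_min ?_ h1
      have := mul_le_mul_of_nonneg_left key (le_of_lt hγ0)
      have hγinv : γ * (1 / γ) = 1 := by field_simp
      nlinarith
  · -- part (ii)
    set S : Set ℝ := {y : ℝ | y ∈ Set.Icc (0:ℝ) 1 ∧ g y = 1} with hS
    have hSne : S.Nonempty := ⟨1, h1mem, hg1⟩
    have hSbdd : BddBelow S := ⟨0, fun y hy => hy.1.1⟩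
    have hSclosed : IsClosed S := by
      have : S = Set.Icc (0:ℝ) 1 ∩ g ⁻¹' {1} := by
        ext y; simp [hS, Set.mem_Icc, and_comm]
      rw [this]
      exact hcont.preimage_isClosed_of_isClosed isClosed_Icc isClosed_singleton
    have hmem : sInf S ∈ S := hSclosed.csInf_mem hSne hSbdd
    obtain ⟨hx₁mem, hgx₁⟩ := hmem
    have key := hconc.2 hx hx₁mem ha hb hab
    simp only [smul_eq_mul] at key
    rw [hgx₁] at key
    linarith
end

section
/- Let G = (I⁰, I¹; F; w) be a distribution instance and 0 ≤ τ ≤ 1/2. Suppose α¹ is a refinement of the side-1 weights achieving τ-multiplicative error, and α⁰ is its proportional response. Let g* denote the power function Pow(β⁰‖β¹) of any refinement pair (β⁰, β¹) that is locally maximin on both sides and mutually proportional responses (this power function is independent of the choice of such pair). Then for every x ∈ [0,1], Pow(α⁰‖α¹)(x) ≤ min{ min{g*(0) + (1+2τ)·(g*(x) − g*(0)), 1}, g*((1/(1+2τ))·x + (1 − 1/(1+2τ))·x₁) }, where x₁ = inf{y ∈ [0,1] : g*(y) = 1}. -/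
open Finset

variable {V : Type*} [DecidableEq V]

/-- The power function `Pow(P ‖ Q)(x)`: the maximum of `Σ t·Q` over `t : F → [0,1]`
with `Σ t·P ≤ x` (fractional knapsack). -/
noncomputable def powFn (F : Finset (V × V)) (P Q : V × V → ℝ) (x : ℝ) : ℝ :=
  sSup {v : ℝ | ∃ t : V × V → ℝ, (∀ e, 0 ≤ t e ∧ t e ≤ 1) ∧
    (∑ e ∈ F, t e * P e) ≤ x ∧ v = ∑ e ∈ F, t e * Q e}


private lemma powSet_bddAbove (F : Finset (V × V)) (P Q : V × V → ℝ) (x : ℝ)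
    (hQ : ∀ e ∈ F, 0 ≤ Q e) :
    BddAbove {v : ℝ | ∃ t : V × V → ℝ, (∀ e, 0 ≤ t e ∧ t e ≤ 1) ∧
      (∑ e ∈ F, t e * P e) ≤ x ∧ v = ∑ e ∈ F, t e * Q e} := by
  refine ⟨∑ e ∈ F, Q e, ?_⟩
  rintro v ⟨t, ht, -, rfl⟩
  refine Finset.sum_le_sum fun e he => ?_
  obtain ⟨h0, h1⟩ := ht e
  nlinarith [hQ e he]

private lemma le_powFn (F : Finset (V × V)) (P Q : V × V → ℝ) (x : ℝ)
    (hQ : ∀ e ∈ F, 0 ≤ Q e) (t : V × V → ℝ) (ht : ∀ e, 0 ≤ t e ∧ t e ≤ 1)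
    (hbud : (∑ e ∈ F, t e * P e) ≤ x) :
    (∑ e ∈ F, t e * Q e) ≤ powFn F P Q x :=
  le_csSup (powSet_bddAbove F P Q x hQ) ⟨t, ht, hbud, rfl⟩

private lemma powFn_nonneg (F : Finset (V × V)) (P Q : V × V → ℝ) (x : ℝ) (hx : 0 ≤ x)
    (hQ : ∀ e ∈ F, 0 ≤ Q e) : 0 ≤ powFn F P Q x := by
  have := le_powFn F P Q x hQ (fun _ => 0) (fun _ => ⟨le_rfl, zero_le_one⟩) (by simp [hx])
  simpa using this

private lemma powFn_le (F : Finset (V × V)) (P Q : V × V → ℝ) (x B : ℝ) (hx : 0 ≤ x)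
    (h : ∀ t : V × V → ℝ, (∀ e, 0 ≤ t e ∧ t e ≤ 1) → (∑ e ∈ F, t e * P e) ≤ x →
      (∑ e ∈ F, t e * Q e) ≤ B) :
    powFn F P Q x ≤ B := by
  refine csSup_le ⟨0, fun _ => 0, fun _ => ⟨le_rfl, zero_le_one⟩, by simp [hx], by simp⟩ ?_
  rintro v ⟨t, ht, hb, rfl⟩
  exact h t ht hb

set_option maxHeartbeats 1000000 in
/-- **Approximation to the minimal power function.**
In a distribution instance, let `(b0, b1)` be a refinement pair that is locally maximin on
both sides and mutually proportional responses, and write `g* = Pow(b0 ‖ b1)` (this power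
function is independent of the choice of such a pair).  Suppose `0 ≤ τ ≤ 1/2`, `a1` is a
refinement of the side-1 weights achieving `τ`-multiplicative error (with respect to the
side-0 density vector `ρ*` induced by the locally maximin side-1 refinement `b1`), and `a0`
is the proportional response to `a1`.  Then for every `x ∈ [0,1]`,
`Pow(a0 ‖ a1)(x) ≤ min{ min{g*(0) + (1+2τ)(g*(x) − g*(0)), 1},
 g*((1/(1+2τ))·x + (1 − 1/(1+2τ))·x₁) }`, where `x₁ = inf{y ∈ [0,1] : g*(y) = 1}`. -/
theorem approx_refinement_power_function_bound
    (I0 I1 : Finset V) (F : Finset (V × V)) (w : V → ℝ)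
    (hG : IsDistInstance I0 I1 F w)
    (τ : ℝ) (hτ0 : 0 ≤ τ) (hτ1 : τ ≤ 1 / 2)
    (b0 b1 : V × V → ℝ)
    (hb0 : IsRefinement0 I0 F w b0) (hb1 : IsRefinement1 I1 F w b1)
    (hmb0 : LocallyMaximin0 F w b0) (hmb1 : LocallyMaximin1 F w b1)
    (hprb0 : IsPropRespOf0 F w b0 b1) (hprb1 : IsPropRespOf1 F w b1 b0)
    (a0 a1 : V × V → ℝ)
    (ha0 : IsRefinement0 I0 F w a0) (ha1 : IsRefinement1 I1 F w a1)
    (herr : ∀ i ∈ I0, |density0 F w a1 i - density0 F w b1 i| ≤ τ * density0 F w b1 i)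
    (hpr : IsPropRespOf1 F w a1 a0) :
    ∀ x ∈ Set.Icc (0:ℝ) 1,
      powFn F a0 a1 x ≤
        min (min (powFn F b0 b1 0 + (1 + 2 * τ) * (powFn F b0 b1 x - powFn F b0 b1 0)) 1)
          (powFn F b0 b1 ((1 / (1 + 2 * τ)) * x + (1 - 1 / (1 + 2 * τ)) *
            sInf {y : ℝ | y ∈ Set.Icc (0:ℝ) 1 ∧ powFn F b0 b1 y = 1})) := by
    classical
  obtain ⟨⟨hdisj, hF, hw⟩, hN0, hN1, hwsum0, hwsum1⟩ := hG
  have hw0 : ∀ i ∈ I0, 0 < w i := fun i hi => hw i (Finset.mem_union_left _ hi)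
  have hw1 : ∀ j ∈ I1, 0 < w j := fun j hj => hw j (Finset.mem_union_right _ hj)
  have pa0 : ∀ i ∈ I0, payload0 F a0 i = w i := fun i hi => ha0.2.2 i hi (hN0 i hi)
  have pb0 : ∀ i ∈ I0, payload0 F b0 i = w i := fun i hi => hb0.2.2 i hi (hN0 i hi)
  have pa1 : ∀ j ∈ I1, payload1 F a1 j = w j := fun j hj => ha1.2.2 j hj (hN1 j hj)
  have pb1 : ∀ j ∈ I1, payload1 F b1 j = w j := fun j hj => hb1.2.2 j hj (hN1 j hj)
  have fib0 : ∀ f : V × V → ℝ,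
      ∑ i ∈ I0, ∑ e ∈ F.filter (fun e => e.1 = i), f e = ∑ e ∈ F, f e :=
    fun f => Finset.sum_fiberwise_of_maps_to (fun e he => (hF e he).1) f
  have fib1 : ∀ f : V × V → ℝ,
      ∑ j ∈ I1, ∑ e ∈ F.filter (fun e => e.2 = j), f e = ∑ e ∈ F, f e :=
    fun f => Finset.sum_fiberwise_of_maps_to (fun e he => (hF e he).2) f
  have sum_a1 : ∑ e ∈ F, a1 e = 1 := by
    rw [← fib1 a1]
    calc ∑ j ∈ I1, ∑ e ∈ F.filter (fun e => e.2 = j), a1 e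
        = ∑ j ∈ I1, w j := Finset.sum_congr rfl fun j hj => pa1 j hj
      _ = 1 := hwsum1
  have sum_b1 : ∑ e ∈ F, b1 e = 1 := by
    rw [← fib1 b1]
    calc ∑ j ∈ I1, ∑ e ∈ F.filter (fun e => e.2 = j), b1 e
        = ∑ j ∈ I1, w j := Finset.sum_congr rfl fun j hj => pb1 j hj
      _ = 1 := hwsum1
  have sum_b0 : ∑ e ∈ F, b0 e = 1 := by
    rw [← fib0 b0]
    calc ∑ i ∈ I0, ∑ e ∈ F.filter (fun e => e.1 = i), b0 e
        = ∑ i ∈ I0, w i := Finset.sum_congr rfl fun i hi => pb0 i hi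
      _ = 1 := hwsum0
  -- positivity of induced payloads
  have Ppos : ∀ (c0 c1 : V × V → ℝ), (∀ e, 0 ≤ c1 e) →
      (∀ e ∈ F, c0 e = c1 e * w e.1 / payload0 F c1 e.1) →
      (∀ i ∈ I0, payload0 F c0 i = w i) → ∀ i ∈ I0, 0 < payload0 F c1 i := by
    intro c0 c1 hnn hresp hpay i hi
    rcases lt_or_ge 0 (payload0 F c1 i) with h | h
    · exact h
    · exfalso
      have hpz : payload0 F c1 i = 0 :=
        le_antisymm h (Finset.sum_nonneg fun e _ => hnn e)
      have hz : ∀ e ∈ F.filter (fun e => e.1 = i), c1 e = 0 :=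
        (Finset.sum_eq_zero_iff_of_nonneg (fun e _ => hnn e)).1 hpz
      have hc0z : payload0 F c0 i = 0 := by
        refine Finset.sum_eq_zero fun e he => ?_
        obtain ⟨heF, hei⟩ := Finset.mem_filter.1 he
        rw [hresp e heF, hz e he]
        simp
      have := hpay i hi
      have hwi := hw0 i hi
      rw [hc0z] at this
      linarith
  have PposA : ∀ i ∈ I0, 0 < payload0 F a1 i :=
    Ppos a0 a1 ha1.1 (fun e he => hpr.2 e he) pa0
  have PposB : ∀ i ∈ I0, 0 < payload0 F b1 i :=
    Ppos b0 b1 hb1.1 (fun e he => hprb1.2 e he) pb0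
  have ratio_a : ∀ e ∈ F, a0 e * density0 F w a1 e.1 = a1 e := by
    intro e he
    have hi := (hF e he).1
    have hP := (PposA e.1 hi).ne'
    have hwp := (hw0 e.1 hi).ne'
    rw [hpr.2 e he, density0]
    field_simp
  have ratio_b : ∀ e ∈ F, b0 e * density0 F w b1 e.1 = b1 e := by
    intro e he
    have hi := (hF e he).1
    have hP := (PposB e.1 hi).ne'
    have hwp := (hw0 e.1 hi).ne'
    rw [hprb1.2 e he, density0]
    field_simp
  have rpos : ∀ i ∈ I0, 0 < density0 F w b1 i := fun i hi => div_pos (PposB i hi) (hw0 i hi)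
  have ra_ub : ∀ i ∈ I0, density0 F w a1 i ≤ (1 + τ) * density0 F w b1 i := by
    intro i hi
    have h := abs_le.1 (herr i hi)
    linarith [h.2]
  have ra_lb : ∀ i ∈ I0, (1 - τ) * density0 F w b1 i ≤ density0 F w a1 i := by
    intro i hi
    have h := abs_le.1 (herr i hi)
    linarith [h.1]
  have pay_eq : ∀ i ∈ I0, payload0 F b1 i = density0 F w b1 i * w i := by
    intro i hi
    have hwp := (hw0 i hi).ne'
    rw [density0]
    field_simp
  -- g(0) = 0
  have g0 : powFn F b0 b1 0 = 0 := by
    refine le_antisymm ?_ (powFn_nonneg F b0 b1 0 le_rfl fun e _ => hb1.1 e)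
    refine powFn_le F b0 b1 0 0 le_rfl ?_
    intro t ht hbud
    have hnn : ∀ e ∈ F, 0 ≤ t e * b0 e := fun e _ => mul_nonneg (ht e).1 (hb0.1 e)
    have hz : ∀ e ∈ F, t e * b0 e = 0 :=
      (Finset.sum_eq_zero_iff_of_nonneg hnn).1
        (le_antisymm hbud (Finset.sum_nonneg hnn))
    refine le_of_eq (Finset.sum_eq_zero fun e he => ?_)
    rw [← ratio_b e he, ← mul_assoc, hz e he, zero_mul]
  -- g(1) = 1
  have g1 : powFn F b0 b1 1 = 1 := by
    refine le_antisymm ?_ ?_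
    · refine powFn_le F b0 b1 1 1 zero_le_one ?_
      intro t ht _
      calc ∑ e ∈ F, t e * b1 e ≤ ∑ e ∈ F, b1 e := by
            refine Finset.sum_le_sum fun e he => ?_
            obtain ⟨h0, h1⟩ := ht e
            nlinarith [hb1.1 e]
        _ = 1 := sum_b1
    · have := le_powFn F b0 b1 1 (fun e _ => hb1.1 e) (fun _ => 1)
        (fun _ => ⟨zero_le_one, le_rfl⟩) (by simp [sum_b0])
      simpa [sum_b1] using this
  -- the infimum is 1
  have xinf : sInf {y : ℝ | y ∈ Set.Icc (0:ℝ) 1 ∧ powFn F b0 b1 y = 1} = 1 := by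
    have hset : {y : ℝ | y ∈ Set.Icc (0:ℝ) 1 ∧ powFn F b0 b1 y = 1} = {1} := by
      ext y
      simp only [Set.mem_setOf_eq, Set.mem_singleton_iff, Set.mem_Icc]
      constructor
      · rintro ⟨⟨hy0, hy1⟩, hgy⟩
        by_contra hne
        have hylt : y < 1 := lt_of_le_of_ne hy1 hne
        have hI0ne : I0.Nonempty := by
          by_contra h
          rw [Finset.not_nonempty_iff_eq_empty] at h
          rw [h] at hwsum0
          simp at hwsum0
        obtain ⟨i0, hi0, hmin⟩ := Finset.exists_min_image I0 (density0 F w b1) hI0ne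
        have hmpos : 0 < density0 F w b1 i0 := rpos i0 hi0
        have hub : powFn F b0 b1 y ≤ 1 - density0 F w b1 i0 * (1 - y) := by
          refine powFn_le F b0 b1 y _ hy0 ?_
          intro t ht hbud
          have h1 : ∑ e ∈ F, (1 - t e) * b1 e = 1 - ∑ e ∈ F, t e * b1 e := by
            have : ∑ e ∈ F, (1 - t e) * b1 e = ∑ e ∈ F, (b1 e - t e * b1 e) :=
              Finset.sum_congr rfl fun e _ => by ring
            rw [this, Finset.sum_sub_distrib, sum_b1]
          have h2 : ∑ e ∈ F, (1 - t e) * (b0 e * density0 F w b1 i0) ≤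
              ∑ e ∈ F, (1 - t e) * b1 e := by
            refine Finset.sum_le_sum fun e he => ?_
            rw [← ratio_b e he]
            have hm := hmin e.1 (hF e he).1
            have h1t : 0 ≤ 1 - t e := by linarith [(ht e).2]
            nlinarith [mul_le_mul_of_nonneg_left hm (mul_nonneg h1t (hb0.1 e))]
          have h3 : ∑ e ∈ F, (1 - t e) * (b0 e * density0 F w b1 i0) =
              density0 F w b1 i0 * (1 - ∑ e ∈ F, t e * b0 e) := by
            have : ∑ e ∈ F, (1 - t e) * (b0 e * density0 F w b1 i0) =
                ∑ e ∈ F, (density0 F w b1 i0 * b0 e - density0 F w b1 i0 * (t e * b0 e)) :=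
              Finset.sum_congr rfl fun e _ => by ring
            rw [this, Finset.sum_sub_distrib, ← Finset.mul_sum, ← Finset.mul_sum, sum_b0]
            ring
          have h4 : density0 F w b1 i0 * (1 - y) ≤ density0 F w b1 i0 * (1 - ∑ e ∈ F, t e * b0 e) := by
            have : (1 : ℝ) - y ≤ 1 - ∑ e ∈ F, t e * b0 e := by linarith
            exact mul_le_mul_of_nonneg_left this hmpos.le
          linarith [h2, h3 ▸ h2]
        rw [hgy] at hub
        nlinarith
      · rintro rfl
        exact ⟨⟨zero_le_one, le_rfl⟩, g1⟩
    rw [hset, csInf_singleton]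
  -- main part
  intro x hx
  obtain ⟨hx0, hx1⟩ := hx
  rw [g0, xinf]
  have hts : (0:ℝ) < 1 + 2 * τ := by linarith
  have hc1 : 1 / (1 + 2 * τ) ≤ 1 - τ := by
    rw [div_le_iff₀ hts]
    nlinarith
  have hc0 : 0 < 1 / (1 + 2 * τ) := by positivity
  set y3 : ℝ := 1 / (1 + 2 * τ) * x + (1 - 1 / (1 + 2 * τ)) * 1 with hy3
  have hy30 : 0 ≤ y3 := by
    rw [hy3]
    nlinarith
  have hgx0 : 0 ≤ powFn F b0 b1 x := powFn_nonneg F b0 b1 x hx0 fun e _ => hb1.1 e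
  have master : ∀ t : V × V → ℝ, (∀ e, 0 ≤ t e ∧ t e ≤ 1) →
      (∑ e ∈ F, t e * a0 e) ≤ x →
      (∑ e ∈ F, t e * a1 e) ≤ (1 + 2 * τ) * powFn F b0 b1 x ∧
      (∑ e ∈ F, t e * a1 e) ≤ powFn F b0 b1 y3 := by
    intro t ht hbud
    set s : V → ℝ := fun i =>
      if i ∈ I0 then (∑ e ∈ F.filter (fun e => e.1 = i), t e * a0 e) / w i else 0 with hs
    have hs0 : ∀ i, 0 ≤ s i := by
      intro i
      simp only [hs]
      split
      · rename_i hi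
        exact div_nonneg (Finset.sum_nonneg fun e _ => mul_nonneg (ht e).1 (ha0.1 e))
          (hw0 i hi).le
      · exact le_rfl
    have hs1 : ∀ i, s i ≤ 1 := by
      intro i
      simp only [hs]
      split
      · rename_i hi
        rw [div_le_one (hw0 i hi)]
        calc ∑ e ∈ F.filter (fun e => e.1 = i), t e * a0 e
            ≤ ∑ e ∈ F.filter (fun e => e.1 = i), a0 e := by
              refine Finset.sum_le_sum fun e _ => ?_
              obtain ⟨h0, h1⟩ := ht e
              nlinarith [ha0.1 e]
          _ = w i := pa0 i hi
      · exact zero_le_one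
    have hsw : ∀ i ∈ I0, s i * w i = ∑ e ∈ F.filter (fun e => e.1 = i), t e * a0 e := by
      intro i hi
      simp only [hs, if_pos hi]
      exact div_mul_cancel₀ _ (hw0 i hi).ne'
    have hS : ∑ i ∈ I0, s i * w i = ∑ e ∈ F, t e * a0 e := by
      rw [Finset.sum_congr rfl hsw, fib0]
    have hSx : ∑ i ∈ I0, s i * w i ≤ x := by rw [hS]; exact hbud
    have hS0 : 0 ≤ ∑ i ∈ I0, s i * w i :=
      Finset.sum_nonneg fun i hi => mul_nonneg (hs0 i) (hw0 i hi).le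
    -- regrouping identities
    have R1 : ∑ e ∈ F, t e * a0 e * density0 F w b1 e.1 = ∑ e ∈ F, s e.1 * b1 e := by
      rw [← fib0 (fun e => t e * a0 e * density0 F w b1 e.1), ← fib0 (fun e => s e.1 * b1 e)]
      refine Finset.sum_congr rfl fun i hi => ?_
      have hL : ∑ e ∈ F.filter (fun e => e.1 = i), t e * a0 e * density0 F w b1 e.1
          = s i * w i * density0 F w b1 i := by
        rw [hsw i hi, Finset.sum_mul]
        refine Finset.sum_congr rfl fun e he => ?_
        rw [(Finset.mem_filter.1 he).2]
      have hR : ∑ e ∈ F.filter (fun e => e.1 = i), s e.1 * b1 e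
          = s i * (density0 F w b1 i * w i) := by
        rw [← pay_eq i hi, payload0, Finset.mul_sum]
        refine Finset.sum_congr rfl fun e he => ?_
        rw [(Finset.mem_filter.1 he).2]
      rw [hL, hR]
      ring
    have R2 : ∑ e ∈ F, s e.1 * b0 e = ∑ i ∈ I0, s i * w i := by
      rw [← fib0 (fun e => s e.1 * b0 e)]
      refine Finset.sum_congr rfl fun i hi => ?_
      calc ∑ e ∈ F.filter (fun e => e.1 = i), s e.1 * b0 e
          = ∑ e ∈ F.filter (fun e => e.1 = i), s i * b0 e := by
            refine Finset.sum_congr rfl fun e he => ?_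
            rw [(Finset.mem_filter.1 he).2]
        _ = s i * payload0 F b0 i := by rw [payload0, Finset.mul_sum]
        _ = s i * w i := by rw [pb0 i hi]
    have R3 : ∑ e ∈ F, a0 e * density0 F w b1 e.1 = 1 := by
      rw [← fib0 (fun e => a0 e * density0 F w b1 e.1)]
      calc ∑ i ∈ I0, ∑ e ∈ F.filter (fun e => e.1 = i), a0 e * density0 F w b1 e.1
          = ∑ i ∈ I0, payload0 F b1 i := by
            refine Finset.sum_congr rfl fun i hi => ?_
            calc ∑ e ∈ F.filter (fun e => e.1 = i), a0 e * density0 F w b1 e.1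
                = ∑ e ∈ F.filter (fun e => e.1 = i), a0 e * density0 F w b1 i := by
                  refine Finset.sum_congr rfl fun e he => ?_
                  rw [(Finset.mem_filter.1 he).2]
              _ = payload0 F a0 i * density0 F w b1 i := by rw [payload0, Finset.sum_mul]
              _ = payload0 F b1 i := by rw [pa0 i hi, pay_eq i hi]; ring
        _ = ∑ e ∈ F, b1 e := by
            simp only [payload0]
            exact fib0 b1
        _ = 1 := sum_b1
    -- bound A
    have hsb1_mem : ∑ e ∈ F, s e.1 * b1 e ≤ powFn F b0 b1 x :=
      le_powFn F b0 b1 x (fun e _ => hb1.1 e) (fun e => s e.1)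
        (fun e => ⟨hs0 e.1, hs1 e.1⟩) (by rw [R2]; exact hSx)
    have hsb1_nn : 0 ≤ ∑ e ∈ F, s e.1 * b1 e :=
      Finset.sum_nonneg fun e _ => mul_nonneg (hs0 e.1) (hb1.1 e)
    have vA : ∑ e ∈ F, t e * a1 e ≤ (1 + τ) * ∑ e ∈ F, s e.1 * b1 e := by
      calc ∑ e ∈ F, t e * a1 e
          = ∑ e ∈ F, t e * (a0 e * density0 F w a1 e.1) :=
            Finset.sum_congr rfl fun e he => by rw [ratio_a e he]
        _ ≤ ∑ e ∈ F, (1 + τ) * (t e * a0 e * density0 F w b1 e.1) := by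
            refine Finset.sum_le_sum fun e he => ?_
            have hub := ra_ub e.1 (hF e he).1
            have h0 := (ht e).1
            have ha := ha0.1 e
            nlinarith [mul_le_mul_of_nonneg_left hub (mul_nonneg h0 ha)]
        _ = (1 + τ) * ∑ e ∈ F, t e * a0 e * density0 F w b1 e.1 := by
            rw [Finset.mul_sum]
        _ = (1 + τ) * ∑ e ∈ F, s e.1 * b1 e := by rw [R1]
    have boundA : ∑ e ∈ F, t e * a1 e ≤ (1 + 2 * τ) * powFn F b0 b1 x := by
      have h1 : (1 + τ) * (∑ e ∈ F, s e.1 * b1 e) ≤ (1 + τ) * powFn F b0 b1 x :=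
        mul_le_mul_of_nonneg_left hsb1_mem (by linarith)
      nlinarith
    -- bound C
    have onemv : (1 - τ) * (1 - ∑ e ∈ F, s e.1 * b1 e) ≤ 1 - ∑ e ∈ F, t e * a1 e := by
      have h1 : ∑ e ∈ F, (1 - t e) * a1 e = 1 - ∑ e ∈ F, t e * a1 e := by
        have : ∑ e ∈ F, (1 - t e) * a1 e = ∑ e ∈ F, (a1 e - t e * a1 e) :=
          Finset.sum_congr rfl fun e _ => by ring
        rw [this, Finset.sum_sub_distrib, sum_a1]
      have h2 : ∑ e ∈ F, (1 - τ) * ((a0 e - t e * a0 e) * density0 F w b1 e.1) ≤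
          ∑ e ∈ F, (1 - t e) * a1 e := by
        refine Finset.sum_le_sum fun e he => ?_
        rw [← ratio_a e he]
        have hlb := ra_lb e.1 (hF e he).1
        have h1t : 0 ≤ 1 - t e := by linarith [(ht e).2]
        have ha := ha0.1 e
        nlinarith [mul_le_mul_of_nonneg_left hlb (mul_nonneg h1t ha)]
      have h3 : ∑ e ∈ F, (1 - τ) * ((a0 e - t e * a0 e) * density0 F w b1 e.1) =
          (1 - τ) * (1 - ∑ e ∈ F, s e.1 * b1 e) := by
        have hsplit : ∑ e ∈ F, (a0 e - t e * a0 e) * density0 F w b1 e.1 =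
            (∑ e ∈ F, a0 e * density0 F w b1 e.1) -
              ∑ e ∈ F, t e * a0 e * density0 F w b1 e.1 := by
          rw [← Finset.sum_sub_distrib]
          exact Finset.sum_congr rfl fun e _ => by ring
        rw [← Finset.mul_sum, hsplit, R3, R1]
      linarith [h3 ▸ h2, h1]
    have hu01 : ∀ e : V × V, 0 ≤ 1 - (1 - τ) * (1 - s e.1) ∧ 1 - (1 - τ) * (1 - s e.1) ≤ 1 := by
      intro e
      have h0 := hs0 e.1
      have h1 := hs1 e.1
      constructor
      · nlinarith
      · nlinarith
    have expand_u : ∀ c : V × V → ℝ, (∑ e ∈ F, c e = 1) →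
        ∑ e ∈ F, (1 - (1 - τ) * (1 - s e.1)) * c e =
          1 - (1 - τ) * (1 - ∑ e ∈ F, s e.1 * c e) := by
      intro c hc
      have : ∑ e ∈ F, (1 - (1 - τ) * (1 - s e.1)) * c e =
          ∑ e ∈ F, (c e - ((1 - τ) * c e - (1 - τ) * (s e.1 * c e))) :=
        Finset.sum_congr rfl fun e _ => by ring
      rw [this, Finset.sum_sub_distrib, Finset.sum_sub_distrib, ← Finset.mul_sum,
        ← Finset.mul_sum, hc]
      ring
    have budget_u : ∑ e ∈ F, (1 - (1 - τ) * (1 - s e.1)) * b0 e ≤ y3 := by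
      rw [expand_u b0 sum_b0, R2]
      have hτ' : (0:ℝ) ≤ 1 - τ := by linarith
      have h1 : 1 - (1 - τ) * (1 - ∑ i ∈ I0, s i * w i) ≤ 1 - (1 - τ) * (1 - x) := by
        nlinarith [mul_le_mul_of_nonneg_left hSx hτ']
      have h2 : 1 - (1 - τ) * (1 - x) ≤ y3 := by
        rw [hy3]
        nlinarith [mul_nonneg (by linarith : (0:ℝ) ≤ 1 - τ - 1 / (1 + 2 * τ))
          (by linarith : (0:ℝ) ≤ 1 - x)]
      linarith
    have value_u : ∑ e ∈ F, t e * a1 e ≤ ∑ e ∈ F, (1 - (1 - τ) * (1 - s e.1)) * b1 e := by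
      rw [expand_u b1 sum_b1]
      linarith
    have u_mem : ∑ e ∈ F, (1 - (1 - τ) * (1 - s e.1)) * b1 e ≤ powFn F b0 b1 y3 :=
      le_powFn F b0 b1 y3 (fun e _ => hb1.1 e) (fun e => 1 - (1 - τ) * (1 - s e.1))
        hu01 budget_u
    exact ⟨boundA, le_trans value_u u_mem⟩
  refine le_min (le_min ?_ ?_) ?_
  · have := powFn_le F a0 a1 x ((1 + 2 * τ) * powFn F b0 b1 x) hx0
      fun t ht hb => (master t ht hb).1
    linarith
  · refine powFn_le F a0 a1 x 1 hx0 ?_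
    intro t ht _
    calc ∑ e ∈ F, t e * a1 e ≤ ∑ e ∈ F, a1 e := by
          refine Finset.sum_le_sum fun e he => ?_
          obtain ⟨h0, h1⟩ := ht e
          nlinarith [ha1.1 e]
      _ = 1 := sum_a1
  · exact powFn_le F a0 a1 x (powFn F b0 b1 y3) hx0 fun t ht hb => (master t ht hb).2
end
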